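/- arXiv:1612.00252 — 12 statements merged into one kernel-verified Lean document; each statement's English description precedes it below -/
import Mathlib

section
/- Let A be a collection of partial functions on a base X closed under domain-disjoint union wherever defined. Let Y be a set disjoint from X with a bijection f : X → Y, and define θ(a) = ρ(a) ∪ {(f(x), f(x)) : x ∈ dom(ρ(a))} where ρ is the identity representation. Then for all a, b ∈ A, θ(a) and θ(b) have disjoint domains if and only if θ(a) ∩ θ(b) = ∅; hence θ is simultaneously a representation by partial functions under domain-disjoint union and a representation by sets under disjoint union. -/
/-- The domain of a partial function viewed as a set of ordered pairs. -/
def pfDom {U : Type*} (f : Set (U × U)) : Set U := {x | ∃ y, (x, y) ∈ f}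

/-- The map θ of Statement 2: `θ a = a ∪ {(f x, f x) : x ∈ dom a}`. -/
def theta {U : Type*} (f : U → U) (a : Set (U × U)) : Set (U × U) :=
  a ∪ (fun x => (f x, f x)) '' pfDom a

lemma pfDom_union {U : Type*} (a b : Set (U × U)) :
    pfDom (a ∪ b) = pfDom a ∪ pfDom b := by
  ext x; simp [pfDom, exists_or]

lemma pfDom_theta {U : Type*} (f : U → U) (a : Set (U × U)) :
    pfDom (theta f a) = pfDom a ∪ f '' pfDom a := by
  rw [theta, pfDom_union]
  congr 1
  ext x
  constructor
  · rintro ⟨y, u, hu, huv⟩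
    exact ⟨u, hu, (Prod.ext_iff.1 huv).1⟩
  · rintro ⟨u, hu, rfl⟩
    exact ⟨f u, u, hu, rfl⟩

/-- Let `A` be a collection of partial functions on a base `X` closed under
domain-disjoint union, `Y` disjoint from `X` with a bijection `f : X → Y`, and
`θ a = a ∪ {(f x, f x) : x ∈ dom a}`.  Then images under `θ` have disjoint domains iff
they are disjoint as sets; hence `θ` is simultaneously a representation by partial
functions under domain-disjoint union and a representation by sets under disjoint union. -/
theorem stmt_2 {U : Type*} (X Y : Set U) (hXY : Disjoint X Y)
    (f : U → U) (hf : Set.BijOn f X Y)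
    (A : Set (Set (U × U)))
    (hfun : ∀ a ∈ A, ∀ p ∈ a, ∀ q ∈ a, (p : U × U).1 = (q : U × U).1 → p.2 = q.2)
    (hbase : ∀ a ∈ A, a ⊆ X ×ˢ X)
    (hA : ∀ a ∈ A, ∀ b ∈ A, pfDom a ∩ pfDom b = ∅ → a ∪ b ∈ A) :
    -- the key property: disjoint domains iff disjoint images
    (∀ a ∈ A, ∀ b ∈ A, (pfDom (theta f a) ∩ pfDom (theta f b) = ∅ ↔
        theta f a ∩ theta f b = ∅)) ∧
    -- θ is a representation by partial functions under domain-disjoint union: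
    Set.InjOn (theta f) A ∧
    (∀ a ∈ A, ∀ p ∈ theta f a, ∀ q ∈ theta f a, (p : U × U).1 = (q : U × U).1 → p.2 = q.2) ∧
    (∀ a ∈ A, ∀ b ∈ A, (pfDom a ∩ pfDom b = ∅ ↔ pfDom (theta f a) ∩ pfDom (theta f b) = ∅)) ∧
    (∀ a ∈ A, ∀ b ∈ A, pfDom a ∩ pfDom b = ∅ → theta f (a ∪ b) = theta f a ∪ theta f b) := by
  -- domains of members of A lie in X
  have hdom : ∀ a ∈ A, pfDom a ⊆ X := by
    rintro a ha x ⟨y, hxy⟩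
    exact (hbase a ha hxy).1
  have hfY : ∀ a ∈ A, f '' pfDom a ⊆ Y := by
    rintro a ha y ⟨x, hx, rfl⟩
    exact hf.mapsTo (hdom a ha hx)
  -- part 4: disjoint domains iff disjoint theta-domains
  have key4 : ∀ a ∈ A, ∀ b ∈ A,
      (pfDom a ∩ pfDom b = ∅ ↔ pfDom (theta f a) ∩ pfDom (theta f b) = ∅) := by
    intro a ha b hb
    constructor
    · intro h
      rw [pfDom_theta, pfDom_theta]
      ext x
      simp only [Set.mem_inter_iff, Set.mem_union, Set.mem_empty_iff_false, iff_false]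
      rintro ⟨h1 | h1, h2 | h2⟩
      · exact absurd (Set.mem_inter h1 h2) (by rw [h]; exact id)
      · exact hXY.ne_of_mem (hdom a ha h1) (hfY b hb h2) rfl
      · exact hXY.ne_of_mem (hdom b hb h2) (hfY a ha h1) rfl
      · obtain ⟨u, hu, rfl⟩ := h1
        obtain ⟨v, hv, hvu⟩ := h2
        have : v = u := hf.injOn (hdom b hb hv) (hdom a ha hu) hvu
        subst this
        exact absurd (Set.mem_inter hu hv) (by rw [h]; exact id)
    · intro h
      rw [pfDom_theta, pfDom_theta] at h
      ext x
      simp only [Set.mem_inter_iff, Set.mem_empty_iff_false, iff_false]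
      rintro ⟨h1, h2⟩
      have : x ∈ (pfDom a ∪ f '' pfDom a) ∩ (pfDom b ∪ f '' pfDom b) :=
        ⟨Or.inl h1, Or.inl h2⟩
      rw [h] at this; exact this
  refine ⟨?_, ?_, ?_, key4, ?_⟩
  · -- part 1
    intro a ha b hb
    rw [← key4 a ha b hb]
    constructor
    · intro h
      ext p
      simp only [Set.mem_inter_iff, Set.mem_empty_iff_false, iff_false]
      rintro ⟨h1, h2⟩
      rcases h1 with h1 | ⟨u, hu, rfl⟩
      · rcases h2 with h2 | ⟨v, hv, hvp⟩
        · have : p.1 ∈ pfDom a ∩ pfDom b := ⟨⟨p.2, h1⟩, ⟨p.2, h2⟩⟩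
          rw [h] at this; exact this
        · have h1X : p.1 ∈ X := (hbase a ha h1).1
          have : p.1 = f v := (Prod.ext_iff.1 hvp.symm).1
          exact hXY.ne_of_mem h1X (hf.mapsTo (hdom b hb hv)) this
      · rcases h2 with h2 | ⟨v, hv, hvp⟩
        · have h2X : f u ∈ Y := hf.mapsTo (hdom a ha hu)
          exact hXY.ne_of_mem (hbase b hb h2).1 h2X rfl
        · have hfv : f v = f u := (Prod.ext_iff.1 hvp).1
          have : v = u := hf.injOn (hdom b hb hv) (hdom a ha hu) hfv
          subst this
          have : v ∈ pfDom a ∩ pfDom b := ⟨hu, hv⟩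
          rw [h] at this; exact this
    · intro h
      ext x
      simp only [Set.mem_inter_iff, Set.mem_empty_iff_false, iff_false]
      rintro ⟨hxa, hxb⟩
      have : (f x, f x) ∈ theta f a ∩ theta f b :=
        ⟨Or.inr ⟨x, hxa, rfl⟩, Or.inr ⟨x, hxb, rfl⟩⟩
      rw [h] at this; exact this
  · -- injectivity
    intro a ha b hb hab
    have recov : ∀ c ∈ A, theta f c ∩ (X ×ˢ X) = c := by
      intro c hc
      ext p
      constructor
      · rintro ⟨hp | ⟨u, hu, rfl⟩, hpX⟩
        · exact hp
        · exact absurd hpX.1 (fun hx => hXY.ne_of_mem hx (hf.mapsTo (hdom c hc hu)) rfl)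
      · intro hp
        exact ⟨Or.inl hp, hbase c hc hp⟩
    rw [← recov a ha, ← recov b hb, hab]
  · -- functionality
    intro a ha p hp q hq hpq
    rcases hp with hp | ⟨u, hu, rfl⟩
    · rcases hq with hq | ⟨v, hv, hvq⟩
      · exact hfun a ha p hp q hq hpq
      · have : q.1 = f v := (Prod.ext_iff.1 hvq.symm).1
        exact absurd (hpq.trans this)
          (hXY.ne_of_mem (hbase a ha hp).1 (hf.mapsTo (hdom a ha hv)))
    · rcases hq with hq | ⟨v, hv, hvq⟩
      · exact absurd hpq.symm
          (hXY.ne_of_mem (hbase a ha hq).1 (hf.mapsTo (hdom a ha hu)))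
      · rw [← hvq] at hpq ⊢
        exact hpq
  · -- theta distributes over union
    intro a ha b hb h
    rw [theta, theta, theta, pfDom_union, Set.image_union]
    ext p
    simp only [Set.mem_union]
    tauto
end

section
/- A partial (⊔•)-algebra A has a disjoint-union representation by sets if and only if there exists a family B of subsets of A, each ⊔•-prime, bi-closed and pairwise incombinable, such that (i) for all a ≠ b in A there is U ∈ B containing exactly one of a, b, and (ii) for all a, b ∈ A with a ⊔• b undefined there is U ∈ B containing both a and b. -/
/-- a partial `(⊔•)`-algebra has a disjoint-union representation by sets iff
there is a family `B` of `⊔•`-prime, bi-closed, pairwise-incombinable subsets of `A`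
such that (i) distinct elements are separated by some `U ∈ B`, and (ii) any pair with
`a ⊔• b` undefined lies jointly in some `U ∈ B`. -/
theorem stmt_5 {A : Type} (op : A → A → Option A) :
    (∃ (X : Type) (θ : A → Set X),
        Function.Injective θ ∧
        (∀ a b, (op a b).isSome ↔ θ a ∩ θ b = ∅) ∧
        (∀ a b c, op a b = some c → θ c = θ a ∪ θ b)) ↔
    (∃ B : Set (Set A),
        (∀ U ∈ B,
          (∀ a b c, op a b = some c → c ∈ U → a ∈ U ∨ b ∈ U) ∧            -- ⊔•-prime
          (∀ a b c, op a b = some c → (a ∈ U ∨ b ∈ U) → c ∈ U) ∧          -- bi-closed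
          (∀ a ∈ U, ∀ b ∈ U, op a b = none)) ∧                            -- pairwise incombinable
        (∀ a b : A, a ≠ b → ∃ U ∈ B, (a ∈ U ∧ b ∉ U) ∨ (b ∈ U ∧ a ∉ U)) ∧
        (∀ a b : A, op a b = none → ∃ U ∈ B, a ∈ U ∧ b ∈ U)) := by
  constructor
  · rintro ⟨X, θ, hinj, hdef, hun⟩
    refine ⟨{U | ∃ x : X, U = {a | x ∈ θ a}}, ?_, ?_, ?_⟩
    · rintro U ⟨x, rfl⟩
      refine ⟨?_, ?_, ?_⟩
      · intro a b c hc hcU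
        have := hun a b c hc
        have : x ∈ θ a ∪ θ b := this ▸ hcU
        exact this
      · intro a b c hc hab
        have := hun a b c hc
        show x ∈ θ c
        rw [this]
        exact hab
      · intro a ha b hb
        by_contra hne
        have hs : (op a b).isSome := by
          cases h : op a b with
          | none => exact absurd h hne
          | some c => simp
        have := (hdef a b).mp hs
        have : x ∈ θ a ∩ θ b := ⟨ha, hb⟩
        rw [‹θ a ∩ θ b = ∅›] at this
        exact this
    · intro a b hab
      have hne : θ a ≠ θ b := fun h => hab (hinj h)
      simp only [ne_eq, Set.ext_iff, not_forall] at hne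
      rcases hne with ⟨x, hx⟩
      by_cases hxa : x ∈ θ a
      · exact ⟨{a | x ∈ θ a}, ⟨x, rfl⟩, Or.inl ⟨hxa, by tauto⟩⟩
      · exact ⟨{a | x ∈ θ a}, ⟨x, rfl⟩, Or.inr ⟨by tauto, hxa⟩⟩
      
    · intro a b hnone
      have : ¬ (op a b).isSome := by simp [hnone]
      have hne : θ a ∩ θ b ≠ ∅ := fun h => this ((hdef a b).mpr h)
      rcases Set.nonempty_iff_ne_empty.mpr hne with ⟨x, hxa, hxb⟩
      exact ⟨{a | x ∈ θ a}, ⟨x, rfl⟩, hxa, hxb⟩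
  · rintro ⟨B, hB, hsep, hjoint⟩
    refine ⟨Set A, fun a => {U | U ∈ B ∧ a ∈ U}, ?_, ?_, ?_⟩
    · intro a b h
      replace h : {U | U ∈ B ∧ a ∈ U} = {U | U ∈ B ∧ b ∈ U} := h
      by_contra hab
      rcases hsep a b hab with ⟨U, hU, h1 | h1⟩
      · have : U ∈ {U | U ∈ B ∧ a ∈ U} := ⟨hU, h1.1⟩
        rw [h] at this
        exact h1.2 this.2
      · have : U ∈ {U | U ∈ B ∧ b ∈ U} := ⟨hU, h1.1⟩
        rw [← h] at this
        exact h1.2 this.2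
    · intro a b
      constructor
      · intro hs
        cases h : op a b with
        | none => rw [h] at hs; simp at hs
        | some c =>
          ext U
          simp only [Set.mem_inter_iff, Set.mem_empty_iff_false, iff_false]
          rintro ⟨⟨hUB, haU⟩, ⟨_, hbU⟩⟩
          have := (hB U hUB).2.2 a haU b hbU
          rw [h] at this
          simp at this
      · intro hempty
        cases h : op a b with
        | none =>
          rcases hjoint a b h with ⟨U, hU, ha, hb⟩
          have : U ∈ ({U | U ∈ B ∧ a ∈ U} : Set (Set A)) ∩ {U | U ∈ B ∧ b ∈ U} :=
            ⟨⟨hU, ha⟩, ⟨hU, hb⟩⟩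
          rw [hempty] at this
          exact this.elim
        | some c => simp
    · intro a b c hc
      ext U
      simp only [Set.mem_setOf_eq, Set.mem_union]
      constructor
      · rintro ⟨hUB, hcU⟩
        rcases (hB U hUB).1 a b c hc hcU with h | h
        · exact Or.inl ⟨hUB, h⟩
        · exact Or.inr ⟨hUB, h⟩
      · rintro (⟨hUB, h⟩ | ⟨hUB, h⟩)
        · exact ⟨hUB, (hB U hUB).2.1 a b c hc (Or.inl h)⟩
        · exact ⟨hUB, (hB U hUB).2.1 a b c hc (Or.inr h)⟩
end

section
/- The substructure of the powerset of {1,2,3} (with disjoint union) obtained by removing the set {1,2,3} has no disjoint-union representation: there is no injective map θ on ℘{1,2,3} ∖ {{1,2,3}} into sets such that a ∪• b is defined and in the domain iff θ(a) ∩ θ(b) = ∅ and the union stays representable, respecting the inherited partial structure. Consequently, the class of disjoint-union-representable partial algebras is not closed under relational substructures. -/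
/-- the substructure `℘{1,2,3} ∖ {{1,2,3}}` of the powerset of a three-element
set (with disjoint union) has no disjoint-union representation. -/
theorem stmt_6 :
    ¬ ∃ (X : Type) (θ : {S : Set (Fin 3) // S ≠ Set.univ} → Set X),
        Function.Injective θ ∧
        (∀ a b c : {S : Set (Fin 3) // S ≠ Set.univ},
          ((a : Set (Fin 3)) ∩ (b : Set (Fin 3)) = ∅ ∧
              (a : Set (Fin 3)) ∪ (b : Set (Fin 3)) = (c : Set (Fin 3))) ↔
            (θ a ∩ θ b = ∅ ∧ θ a ∪ θ b = θ c)) ∧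
        (∀ a b : {S : Set (Fin 3) // S ≠ Set.univ}, θ a ∩ θ b = ∅ →
          ∃ c : {S : Set (Fin 3) // S ≠ Set.univ},
            (a : Set (Fin 3)) ∩ (b : Set (Fin 3)) = ∅ ∧
              (a : Set (Fin 3)) ∪ (b : Set (Fin 3)) = (c : Set (Fin 3))) := by
  rintro ⟨X, θ, hinj, hiff, htot⟩
  have ne0 : ({0} : Set (Fin 3)) ≠ Set.univ := by
    intro h
    have : (1 : Fin 3) ∈ ({0} : Set (Fin 3)) := h ▸ Set.mem_univ 1
    simp at this
  have ne1 : ({1} : Set (Fin 3)) ≠ Set.univ := by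
    intro h
    have : (0 : Fin 3) ∈ ({1} : Set (Fin 3)) := h ▸ Set.mem_univ 0
    simp at this
  have ne2 : ({2} : Set (Fin 3)) ≠ Set.univ := by
    intro h
    have : (0 : Fin 3) ∈ ({2} : Set (Fin 3)) := h ▸ Set.mem_univ 0
    simp at this
  have ne01 : ({0, 1} : Set (Fin 3)) ≠ Set.univ := by
    intro h
    have : (2 : Fin 3) ∈ ({0, 1} : Set (Fin 3)) := h ▸ Set.mem_univ 2
    simp at this
  have ne02 : ({0, 2} : Set (Fin 3)) ≠ Set.univ := by
    intro h
    have : (1 : Fin 3) ∈ ({0, 2} : Set (Fin 3)) := h ▸ Set.mem_univ 1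
    simp at this
  have ne12 : ({1, 2} : Set (Fin 3)) ≠ Set.univ := by
    intro h
    have : (0 : Fin 3) ∈ ({1, 2} : Set (Fin 3)) := h ▸ Set.mem_univ 0
    simp at this
  set a0 : {S : Set (Fin 3) // S ≠ Set.univ} := ⟨{0}, ne0⟩ with ha0
  set a1 : {S : Set (Fin 3) // S ≠ Set.univ} := ⟨{1}, ne1⟩ with ha1
  set a2 : {S : Set (Fin 3) // S ≠ Set.univ} := ⟨{2}, ne2⟩ with ha2
  set a01 : {S : Set (Fin 3) // S ≠ Set.univ} := ⟨{0, 1}, ne01⟩ with ha01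
  set a02 : {S : Set (Fin 3) // S ≠ Set.univ} := ⟨{0, 2}, ne02⟩ with ha02
  set a12 : {S : Set (Fin 3) // S ≠ Set.univ} := ⟨{1, 2}, ne12⟩ with ha12
  have h01 : θ a0 ∩ θ a1 = ∅ ∧ θ a0 ∪ θ a1 = θ a01 := by
    refine (hiff a0 a1 a01).1 ⟨?_, ?_⟩ <;>
      · ext x; fin_cases x <;> simp [ha0, ha1, ha01]
  have h02 : θ a0 ∩ θ a2 = ∅ := by
    refine ((hiff a0 a2 a02).1 ⟨?_, ?_⟩).1 <;>
      · ext x; fin_cases x <;> simp [ha0, ha2, ha02]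
  have h12 : θ a1 ∩ θ a2 = ∅ := by
    refine ((hiff a1 a2 a12).1 ⟨?_, ?_⟩).1 <;>
      · ext x; fin_cases x <;> simp [ha1, ha2, ha12]
  have hdisj : θ a01 ∩ θ a2 = ∅ := by
    rw [← h01.2, Set.union_inter_distrib_right, h02, h12, Set.union_empty]
  obtain ⟨c, hc1, hc2⟩ := htot a01 a2 hdisj
  apply c.2
  rw [← hc2]
  ext x; fin_cases x <;> simp [ha01, ha2]
end

section
/- Let A be a countable partial (⊔•)-algebra. If player ∃ has a winning strategy in the ω-length game Γ_ω over A, then A has a disjoint-union representation over a base of size at most 2·|A|². -/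
/-- A move of player ∀ in a non-initial round of the game Γ over a partial `(⊔•)`-algebra:
either pick `a, b` with `a ⊔• b = c ∈ Y` (split), or pick `a ∈ Y` (resp. `b ∈ Y`) and `b`
(resp. `a`) with `a ⊔• b = c` (addL/addR). -/
inductive AMove (A : Type) where
  | split (a b c : A)
  | addL (a b c : A)
  | addR (a b c : A)

/-- Legality of a ∀-move at a position with current set `Y`. -/
def legalMove {A : Type} (op : A → A → Option A) (Y : Finset A) : AMove A → Prop
  | .split a b c => op a b = some c ∧ c ∈ Y
  | .addL a b c => a ∈ Y ∧ op a b = some c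
  | .addR a b c => b ∈ Y ∧ op a b = some c

/-- ∃'s response to a ∀-move: at a split she may add `a` or `b` (chosen by `choice`),
otherwise she must add `a ⊔• b`. -/
def respond {A : Type} [DecidableEq A] (choice : Bool) (Y : Finset A) : AMove A → Finset A
  | .split a b _ => insert (if choice then a else b) Y
  | .addL _ _ c => insert c Y
  | .addR _ _ c => insert c Y

/-- A position `(Y, N)` not yet won by ∀: `Y ∩ N = ∅` and no two elements of `Y`
are combinable. -/
def Good {A : Type} (op : A → A → Option A) (Y N : Finset A) : Prop :=
  (∀ x ∈ Y, x ∉ N) ∧ ∀ a ∈ Y, ∀ b ∈ Y, op a b = none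

/-- `Surv op k Y N`: ∃ can survive `k` further rounds of the game from position `(Y, N)`. -/
def Surv {A : Type} [DecidableEq A] (op : A → A → Option A) :
    ℕ → Finset A → Finset A → Prop
  | 0, Y, N => Good op Y N
  | k + 1, Y, N => Good op Y N ∧
      (∀ a b c, op a b = some c → c ∈ Y →
        Surv op k (insert a Y) N ∨ Surv op k (insert b Y) N) ∧
      (∀ a ∈ Y, ∀ b c, op a b = some c → Surv op k (insert c Y) N) ∧
      (∀ a : A, ∀ b ∈ Y, ∀ c, op a b = some c → Surv op k (insert c Y) N)

/-- ∃ has a winning strategy in the `n`-round game `Γ_n`: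
after any initial ∀-move she can choose an initial position from which she survives. -/
def WinGammaN {A : Type} [DecidableEq A] (op : A → A → Option A) (n : ℕ) : Prop :=
  (∀ a b : A, a ≠ b → Surv op n {a} {b} ∨ Surv op n {b} {a}) ∧
  (∀ a b : A, op a b = none → Surv op n {a, b} ∅)

/-- The sequence of `Y`-components of the positions in a play from `(Y0, N)` in which
∀ plays the moves `m 0, m 1, …` and ∃ follows the strategy `σ`. -/
def playY {A : Type} [DecidableEq A] (σ : Finset A → Finset A → AMove A → Bool)
    (Y0 N : Finset A) (m : ℕ → AMove A) : ℕ → Finset A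
  | 0 => Y0
  | k + 1 => respond (σ (playY σ Y0 N m k) N (m k)) (playY σ Y0 N m k) (m k)

/-- ∃ has a winning strategy in the ω-length game `Γ_ω`: there are choice functions
`σ0` (for the initial round) and `σ` (for later rounds) such that every play, against
any legal sequence of ∀-moves, passes only through good positions. -/
def WinGammaOmega {A : Type} [DecidableEq A] (op : A → A → Option A) : Prop :=
  ∃ (σ0 : A → A → Bool) (σ : Finset A → Finset A → AMove A → Bool),
    (∀ a b : A, a ≠ b → ∀ (m : ℕ → AMove A) (n : ℕ),
      (∀ k < n, legalMove op
          (playY σ (if σ0 a b then {a} else {b}) (if σ0 a b then {b} else {a}) m k) (m k)) →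
      Good op (playY σ (if σ0 a b then {a} else {b}) (if σ0 a b then {b} else {a}) m n)
        (if σ0 a b then {b} else {a})) ∧
    (∀ a b : A, op a b = none → ∀ (m : ℕ → AMove A) (n : ℕ),
      (∀ k < n, legalMove op (playY σ {a, b} ∅ m k) (m k)) →
      Good op (playY σ {a, b} ∅ m n) ∅)

instance {A : Type} [Countable A] : Countable (AMove A) := by
  have hinj : Function.Injective (fun mv : AMove A => match mv with
    | .split a b c => ((0 : Fin 3), a, b, c)
    | .addL a b c => ((1 : Fin 3), a, b, c)
    | .addR a b c => ((2 : Fin 3), a, b, c)) := by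
    intro x y hxy; cases x <;> cases y <;> simp_all
  exact hinj.countable

def Sat {A : Type} (op : A → A → Option A) (S : Set A) : Prop :=
  (∀ a ∈ S, ∀ b ∈ S, op a b = none) ∧
  (∀ a b c, op a b = some c → c ∈ S → a ∈ S ∨ b ∈ S) ∧
  (∀ a b c, a ∈ S → op a b = some c → c ∈ S) ∧
  (∀ a b c, b ∈ S → op a b = some c → c ∈ S)

lemma sat_empty {A : Type} (op : A → A → Option A) : Sat op (∅ : Set A) := by
  refine ⟨?_, ?_, ?_, ?_⟩ <;> simp

lemma subset_respond {A : Type} [DecidableEq A] (c : Bool) (Y : Finset A) (mv : AMove A) :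
    Y ⊆ respond c Y mv := by
  cases mv <;> simp [respond, Finset.subset_insert]

open Classical in
noncomputable def limY {A : Type} [DecidableEq A] (op : A → A → Option A)
    (σ : Finset A → Finset A → AMove A → Bool) (N : Finset A) (e : ℕ → AMove A)
    (Y0 : Finset A) : ℕ → Finset A
  | 0 => Y0
  | k + 1 =>
      if legalMove op (limY op σ N e Y0 k) (e k)
      then respond (σ (limY op σ N e Y0 k) N (e k)) (limY op σ N e Y0 k) (e k)
      else limY op σ N e Y0 k

lemma limY_mono {A : Type} [DecidableEq A] (op : A → A → Option A)
    (σ : Finset A → Finset A → AMove A → Bool) (N : Finset A) (e : ℕ → AMove A)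
    (Y0 : Finset A) : Monotone (limY op σ N e Y0) := by
  apply monotone_nat_of_le_succ
  intro n
  rw [limY]
  split
  · exact subset_respond _ _ _
  · exact le_refl _

lemma playY_congr {A : Type} [DecidableEq A] (σ : Finset A → Finset A → AMove A → Bool)
    (Y0 N : Finset A) (m m' : ℕ → AMove A) :
    ∀ n, (∀ k < n, m k = m' k) → playY σ Y0 N m n = playY σ Y0 N m' n := by
  intro n
  induction n with
  | zero => intro _; rfl
  | succ n ih =>
    intro hmm
    have h1 := ih (fun k hk => hmm k (hk.trans (Nat.lt_succ_self n)))
    have h2 := hmm n (Nat.lt_succ_self n)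
    simp [playY, h1, h2]

lemma limY_extract {A : Type} [DecidableEq A] (op : A → A → Option A)
    (σ : Finset A → Finset A → AMove A → Bool) (N : Finset A) (e : ℕ → AMove A)
    (Y0 : Finset A) (n : ℕ) :
    ∃ (m : ℕ → AMove A) (n' : ℕ),
      playY σ Y0 N m n' = limY op σ N e Y0 n ∧
      ∀ k < n', legalMove op (playY σ Y0 N m k) (m k) := by
  classical
  induction n with
  | zero => exact ⟨fun _ => e 0, 0, rfl, by omega⟩
  | succ n ih =>
    obtain ⟨m, n', hplay, hleg⟩ := ih
    by_cases hl : legalMove op (limY op σ N e Y0 n) (e n)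
    · refine ⟨fun k => if k < n' then m k else e n, n' + 1, ?_, ?_⟩
      · have hsame : playY σ Y0 N (fun k => if k < n' then m k else e n) n'
            = playY σ Y0 N m n' := by
          apply playY_congr
          intro k hk; simp [hk]
        rw [limY, if_pos hl]
        simp only [playY, hsame, hplay]
        simp
      · intro k hk
        rcases Nat.lt_succ_iff_lt_or_eq.mp hk with hk' | hk'
        · have hsame : playY σ Y0 N (fun k => if k < n' then m k else e n) k
              = playY σ Y0 N m k := by
            apply playY_congr
            intro j hj; simp [hj.trans hk']
          rw [hsame]; simpa [hk'] using hleg k hk'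
        · rw [hk']
          have hsame : playY σ Y0 N (fun k => if k < n' then m k else e n) n'
              = playY σ Y0 N m n' := by
            apply playY_congr
            intro j hj; simp [hj]
          rw [hsame, hplay]
          simpa using hl
    · rw [limY, if_neg hl]
      exact ⟨m, n', hplay, hleg⟩

/-- Main limit lemma: from the `Good`-guarantee along all legal plays, get a saturated set. -/
lemma exists_sat {A : Type} [DecidableEq A] [Countable A] (op : A → A → Option A)
    (σ : Finset A → Finset A → AMove A → Bool) (Y0 N : Finset A) (a0 : A)
    (hG : ∀ (m : ℕ → AMove A) (n : ℕ),
      (∀ k < n, legalMove op (playY σ Y0 N m k) (m k)) →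
      Good op (playY σ Y0 N m n) N) :
    ∃ S : Set A, Sat op S ∧ ↑Y0 ⊆ S ∧ ∀ x ∈ S, x ∉ N := by
  classical
  have : Nonempty (AMove A) := ⟨.split a0 a0 a0⟩
  obtain ⟨f, hf⟩ := exists_surjective_nat (AMove A)
  set e : ℕ → AMove A := fun k => f (Nat.unpair k).2 with he_def
  have he : ∀ (v : AMove A) (n : ℕ), ∃ k, n ≤ k ∧ e k = v := by
    intro v n
    obtain ⟨j, hj⟩ := hf v
    exact ⟨Nat.pair n j, Nat.left_le_pair n j, by simp [he_def, Nat.unpair_pair, hj]⟩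
  set Y := limY op σ N e Y0 with hY
  have hgood : ∀ n, Good op (Y n) N := by
    intro n
    obtain ⟨m, n', hplay, hleg⟩ := limY_extract op σ N e Y0 n
    rw [hY, ← hplay]
    exact hG m n' hleg
  set S : Set A := {x | ∃ n, x ∈ Y n} with hS
  have hmemS : ∀ x, x ∈ S ↔ ∃ n, x ∈ Y n := fun x => Iff.rfl
  -- a step where a legal move `v` fires:
  have hstep : ∀ (v : AMove A) (n : ℕ), legalMove op (Y n) v →
      ∃ k, Y n ⊆ Y k ∧ Y (k + 1) = respond (σ (Y k) N v) (Y k) v := by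
    intro v n hleg
    obtain ⟨k, hk, hek⟩ := he v n
    have hsub : Y n ⊆ Y k := limY_mono op σ N e Y0 hk
    have hlegk : legalMove op (Y k) v := by
      cases v with
      | split a b c => exact ⟨hleg.1, hsub hleg.2⟩
      | addL a b c => exact ⟨hsub hleg.1, hleg.2⟩
      | addR a b c => exact ⟨hsub hleg.1, hleg.2⟩
    refine ⟨k, hsub, ?_⟩
    rw [hY]
    rw [limY]
    rw [← hY, hek, if_pos hlegk]
  refine ⟨S, ⟨?_, ?_, ?_, ?_⟩, ?_, ?_⟩
  · -- no combinable pair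
    rintro a ⟨n₁, hn₁⟩ b ⟨n₂, hn₂⟩
    have h1 : a ∈ Y (max n₁ n₂) := limY_mono op σ N e Y0 (le_max_left _ _) hn₁
    have h2 : b ∈ Y (max n₁ n₂) := limY_mono op σ N e Y0 (le_max_right _ _) hn₂
    exact (hgood _).2 a h1 b h2
  · -- split saturation
    rintro a b c hop ⟨n, hn⟩
    obtain ⟨k, hsub, hk⟩ := hstep (.split a b c) n ⟨hop, hn⟩
    rw [respond] at hk
    by_cases hb : σ (Y k) N (AMove.split a b c)
    · left; exact ⟨k + 1, by rw [hk]; simp [hb]⟩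
    · right; exact ⟨k + 1, by rw [hk]; simp [hb]⟩
  · -- addL saturation
    rintro a b c ⟨n, hn⟩ hop
    obtain ⟨k, hsub, hk⟩ := hstep (.addL a b c) n ⟨hn, hop⟩
    rw [respond] at hk
    exact ⟨k + 1, by rw [hk]; simp⟩
  · -- addR saturation
    rintro a b c ⟨n, hn⟩ hop
    obtain ⟨k, hsub, hk⟩ := hstep (.addR a b c) n ⟨hn, hop⟩
    rw [respond] at hk
    exact ⟨k + 1, by rw [hk]; simp⟩
  · intro x hx
    exact ⟨0, hx⟩
  · rintro x ⟨n, hn⟩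
    exact (hgood n).1 x hn

/-- if `A` is a countable partial `(⊔•)`-algebra and ∃ has a winning strategy
in the ω-length game `Γ_ω` over `A`, then `A` has a disjoint-union representation over a
base of size at most `2·|A|²`. -/
theorem stmt_9 {A : Type} [DecidableEq A] [Countable A] (op : A → A → Option A)
    (h : WinGammaOmega op) :
    ∃ (X : Type) (θ : A → Set X),
      Function.Injective θ ∧
      (∀ a b, (op a b).isSome ↔ θ a ∩ θ b = ∅) ∧
      (∀ a b c, op a b = some c → θ c = θ a ∪ θ b) ∧
      Cardinal.mk X ≤ 2 * Cardinal.mk A ^ 2 := by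
  classical
  obtain ⟨σ0, σ, h1, h2⟩ := h
  have key1 : ∀ a b : A, a ≠ b →
      ∃ S : Set A, Sat op S ∧ ((a ∈ S ∧ b ∉ S) ∨ (b ∈ S ∧ a ∉ S)) := by
    intro a b hab
    obtain ⟨S, hS, hY0, hN⟩ := exists_sat op σ (if σ0 a b then {a} else {b})
      (if σ0 a b then {b} else {a}) a (h1 a b hab)
    refine ⟨S, hS, ?_⟩
    by_cases hc : σ0 a b
    · simp only [hc, if_true] at hY0 hN
      left
      refine ⟨hY0 (by simp), fun hb => hN b hb (by simp)⟩
    · simp only [hc, if_false] at hY0 hN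
      right
      refine ⟨hY0 (by simp), fun ha => hN a ha (by simp)⟩
  have key2 : ∀ a b : A, op a b = none → ∃ S : Set A, Sat op S ∧ a ∈ S ∧ b ∈ S := by
    intro a b hab
    obtain ⟨S, hS, hY0, hN⟩ := exists_sat op σ {a, b} ∅ a (h2 a b hab)
    exact ⟨S, hS, hY0 (by simp), hY0 (by simp)⟩
  set S1 : A → A → Set A := fun a b =>
    if hab : a ≠ b then (key1 a b hab).choose else ∅ with hS1
  set S2 : A → A → Set A := fun a b =>
    if hab : op a b = none then (key2 a b hab).choose else ∅ with hS2
  have satS1 : ∀ a b, Sat op (S1 a b) := by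
    intro a b
    rw [hS1]
    dsimp only
    split
    · exact (key1 a b ‹_›).choose_spec.1
    · exact sat_empty op
  have satS2 : ∀ a b, Sat op (S2 a b) := by
    intro a b
    rw [hS2]
    dsimp only
    split
    · exact (key2 a b ‹_›).choose_spec.1
    · exact sat_empty op
  have sep1 : ∀ a b : A, a ≠ b →
      (a ∈ S1 a b ∧ b ∉ S1 a b) ∨ (b ∈ S1 a b ∧ a ∉ S1 a b) := by
    intro a b hab
    rw [hS1]; dsimp only; rw [dif_pos hab]
    exact (key1 a b hab).choose_spec.2
  have sep2 : ∀ a b : A, op a b = none → a ∈ S2 a b ∧ b ∈ S2 a b := by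
    intro a b hab
    rw [hS2]; dsimp only; rw [dif_pos hab]
    exact (key2 a b hab).choose_spec.2
  refine ⟨Bool × A × A,
    fun a => {p | if p.1 then a ∈ S1 p.2.1 p.2.2 else a ∈ S2 p.2.1 p.2.2}, ?_, ?_, ?_, ?_⟩
  · -- injective
    intro a b hθ
    by_contra hab
    have hp := Set.ext_iff.mp hθ (true, a, b)
    simp only [Set.mem_setOf_eq, if_true] at hp
    rcases sep1 a b hab with ⟨h₁, h₂⟩ | ⟨h₁, h₂⟩
    · exact h₂ (hp.mp h₁)
    · exact h₂ (hp.mpr h₁)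
  · -- isSome ↔ disjoint
    intro a b
    constructor
    · intro hsome
      obtain ⟨c, hc⟩ := Option.isSome_iff_exists.mp hsome
      ext p
      simp only [Set.mem_inter_iff, Set.mem_setOf_eq, Set.mem_empty_iff_false, iff_false]
      rintro ⟨hpa, hpb⟩
      by_cases hp1 : p.1
      · simp only [hp1, if_true] at hpa hpb
        have := (satS1 p.2.1 p.2.2).1 a hpa b hpb
        rw [hc] at this; exact Option.some_ne_none c this
      · simp only [hp1, if_false] at hpa hpb
        have := (satS2 p.2.1 p.2.2).1 a hpa b hpb
        rw [hc] at this; exact Option.some_ne_none c this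
    · intro hdisj
      by_contra hnone
      rw [Option.not_isSome_iff_eq_none] at hnone
      obtain ⟨ha, hb⟩ := sep2 a b hnone
      have : (false, a, b) ∈ ({p : Bool × A × A |
          if p.1 then a ∈ S1 p.2.1 p.2.2 else a ∈ S2 p.2.1 p.2.2} ∩
          {p | if p.1 then b ∈ S1 p.2.1 p.2.2 else b ∈ S2 p.2.1 p.2.2}) := by
        simp only [Set.mem_inter_iff, Set.mem_setOf_eq]
        exact ⟨ha, hb⟩
      rw [hdisj] at this
      exact this
  · -- union
    intro a b c hop
    ext p
    simp only [Set.mem_union, Set.mem_setOf_eq]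
    by_cases hp1 : p.1 <;> simp only [hp1, if_true, if_false]
    · obtain ⟨_, hsplit, haddL, haddR⟩ := satS1 p.2.1 p.2.2
      exact ⟨fun hc => hsplit a b c hop hc,
        fun hab => hab.elim (fun ha => haddL a b c ha hop) (fun hb => haddR a b c hb hop)⟩
    · obtain ⟨_, hsplit, haddL, haddR⟩ := satS2 p.2.1 p.2.2
      exact ⟨fun hc => hsplit a b c hop hc,
        fun hab => hab.elim (fun ha => haddL a b c ha hop) (fun hb => haddR a b c hb hop)⟩
  · -- cardinality
    apply le_of_eq
    have h1 : Cardinal.mk (Bool × A × A) = Cardinal.mk Bool * (Cardinal.mk A * Cardinal.mk A) := by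
      simp [Cardinal.mk_prod, Cardinal.lift_id]
    rw [h1, Cardinal.mk_bool, pow_two]
end

section
/- Let m, n be sets each of cardinality greater than two, and let X(m,n) be the partial algebra of axial subsets of m × n with S ⊔• T = S ∪ T defined when S ∩ T = ∅ and S ∪ T is axial, with constant 0 = ∅. Then X(m,n) has a (∪•, ∅)-representation by sets. -/
/-- A subset of `m × n` is axial if it is of the form `{i} × J` or `I × {j}`. -/
def Axial {m n : Type} (S : Set (m × n)) : Prop :=
  (∃ (i : m) (J : Set n), S = {i} ×ˢ J) ∨ (∃ (I : Set m) (j : n), S = I ×ˢ {j})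

lemma axial_coll {m n : Type} {S : Set (m × n)} (hS : Axial S) {p q : m × n}
    (hp : p ∈ S) (hq : q ∈ S) : p.1 = q.1 ∨ p.2 = q.2 := by
  rcases hS with ⟨i, J, rfl⟩ | ⟨I, j, rfl⟩
  · left
    rcases hp with ⟨hp1, _⟩
    rcases hq with ⟨hq1, _⟩
    simp_all
  · right
    rcases hp with ⟨_, hp2⟩
    rcases hq with ⟨_, hq2⟩
    simp_all

lemma axial_union {m n : Type} {a b : Set (m × n)} (ha : Axial a) (hb : Axial b)
    (h : ∀ p ∈ a, ∀ q ∈ b, p.1 = q.1 ∨ p.2 = q.2) : Axial (a ∪ b) := by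
  classical
  rcases eq_or_ne a ∅ with rfl | hane
  · simpa using hb
  rcases eq_or_ne b ∅ with rfl | hbne
  · simpa using ha
  obtain ⟨p0, hp0⟩ := Set.nonempty_iff_ne_empty.mpr hane
  obtain ⟨q0, hq0⟩ := Set.nonempty_iff_ne_empty.mpr hbne
  rcases ha with ⟨i, J, rfl⟩ | ⟨I, j, rfl⟩ <;> rcases hb with ⟨i', J', rfl⟩ | ⟨I', j', rfl⟩
  · -- row / row
    rcases eq_or_ne i i' with rfl | hii
    · left; exact ⟨i, J ∪ J', by rw [Set.prod_union]⟩
    · -- all cross pairs must share a column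
      have hcol : ∀ x ∈ J, ∀ y ∈ J', x = y := by
        intro x hx y hy
        have := h (i, x) ⟨rfl, hx⟩ (i', y) ⟨rfl, hy⟩
        simpa [hii] using this
      obtain ⟨hp1, hp2⟩ := hp0
      obtain ⟨hq1, hq2⟩ := hq0
      right
      refine ⟨{i} ∪ {i'}, q0.2, ?_⟩
      have hJ : J = {q0.2} := by
        ext x; constructor
        · intro hx; exact hcol x hx q0.2 hq2
        · intro hx; rcases hx with rfl
          have := hcol p0.2 hp2 q0.2 hq2
          rwa [this] at hp2
      have hJ' : J' = {q0.2} := by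
        ext y; constructor
        · intro hy
          exact (hcol p0.2 hp2 y hy).symm.trans (hcol p0.2 hp2 q0.2 hq2)
        · intro hy; rcases hy with rfl; exact hq2
      rw [hJ, hJ', Set.union_prod]
  · -- row / col
    by_cases hJ : J ⊆ {j'}
    · right
      refine ⟨{i} ∪ I', j', ?_⟩
      have hJeq : J = {j'} := by
        apply Set.Subset.antisymm hJ
        intro x hx; rcases hx with rfl
        obtain ⟨hp1, hp2⟩ := hp0
        have := hJ hp2
        rwa [← this]
      rw [hJeq, Set.union_prod]
    · obtain ⟨x, hx, hxj⟩ := Set.not_subset.mp hJ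
      left
      refine ⟨i, J ∪ {j'}, ?_⟩
      have hI : I' = {i} := by
        ext i1; constructor
        · intro hi1
          have := h (i, x) ⟨rfl, hx⟩ (i1, j') ⟨hi1, rfl⟩
          rcases this with h1 | h2
          · exact h1.symm
          · exact absurd h2 hxj
        · intro hi1
          have hi1' : i1 = i := hi1
          subst hi1'
          obtain ⟨hq1, hq2⟩ := hq0
          have hq2' : q0.2 = j' := hq2
          have := h (i1, x) ⟨rfl, hx⟩ q0 ⟨hq1, hq2⟩
          rcases this with h1 | h2
          · have h1' : i1 = q0.1 := h1
            rw [h1']; exact hq1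
          · exact absurd (h2.trans hq2') hxj
      rw [hI, Set.prod_union]
  · -- col / row
    by_cases hJ : J' ⊆ {j}
    · right
      refine ⟨I ∪ {i'}, j, ?_⟩
      have hJeq : J' = {j} := by
        apply Set.Subset.antisymm hJ
        intro x hx; rcases hx with rfl
        obtain ⟨hq1, hq2⟩ := hq0
        have := hJ hq2
        rwa [← this]
      rw [hJeq, Set.union_prod]
    · obtain ⟨x, hx, hxj⟩ := Set.not_subset.mp hJ
      left
      refine ⟨i', {j} ∪ J', ?_⟩
      have hI : I = {i'} := by
        ext i1; constructor
        · intro hi1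
          have := h (i1, j) ⟨hi1, rfl⟩ (i', x) ⟨rfl, hx⟩
          rcases this with h1 | h2
          · exact h1
          · exact absurd h2.symm hxj
        · intro hi1
          have hi1' : i1 = i' := hi1
          subst hi1'
          obtain ⟨hp1, hp2⟩ := hp0
          have hp2' : p0.2 = j := hp2
          have := h p0 ⟨hp1, hp2⟩ (i1, x) ⟨rfl, hx⟩
          rcases this with h1 | h2
          · have h1' : p0.1 = i1 := h1
            rw [← h1']; exact hp1
          · exact absurd (hp2'.symm.trans h2).symm hxj
      rw [hI, Set.prod_union]
  · -- col / col
    rcases eq_or_ne j j' with rfl | hjj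
    · right; exact ⟨I ∪ I', j, by rw [Set.union_prod]⟩
    · have hrow : ∀ x ∈ I, ∀ y ∈ I', x = y := by
        intro x hx y hy
        have := h (x, j) ⟨hx, rfl⟩ (y, j') ⟨hy, rfl⟩
        simpa [hjj] using this
      obtain ⟨hp1, hp2⟩ := hp0
      obtain ⟨hq1, hq2⟩ := hq0
      left
      refine ⟨q0.1, {j} ∪ {j'}, ?_⟩
      have hI : I = {q0.1} := by
        ext x; constructor
        · intro hx; exact hrow x hx q0.1 hq1
        · intro hx; rcases hx with rfl
          have := hrow p0.1 hp1 q0.1 hq1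
          rwa [this] at hp1
      have hI' : I' = {q0.1} := by
        ext y; constructor
        · intro hy
          exact (hrow p0.1 hp1 y hy).symm.trans (hrow p0.1 hp1 q0.1 hq1)
        · intro hy; rcases hy with rfl; exact hq1
      rw [hI, hI', Set.prod_union]

/-- for `m, n` of cardinality greater than two, the partial algebra
`X(m,n)` of axial subsets of `m × n` (with `S ⊔• T = S ∪ T` defined when `S ∩ T = ∅`
and `S ∪ T` is axial, and `0 = ∅`) has a `(∪•, ∅)`-representation by sets. -/
theorem stmt_10 {m n : Type} (hm : 2 < Cardinal.mk m) (hn : 2 < Cardinal.mk n) :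
    ∃ (X : Type) (θ : {S : Set (m × n) // Axial S} → Set X),
      Function.Injective θ ∧
      (∀ z : {S : Set (m × n) // Axial S}, (z : Set (m × n)) = ∅ → θ z = ∅) ∧
      (∀ a b : {S : Set (m × n) // Axial S},
        (((a : Set (m × n)) ∩ (b : Set (m × n)) = ∅ ∧
            Axial ((a : Set (m × n)) ∪ (b : Set (m × n)))) ↔ θ a ∩ θ b = ∅)) ∧
      (∀ a b : {S : Set (m × n) // Axial S},
        ∀ hd : (a : Set (m × n)) ∩ (b : Set (m × n)) = ∅,
        ∀ hax : Axial ((a : Set (m × n)) ∪ (b : Set (m × n))),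
          θ ⟨(a : Set (m × n)) ∪ (b : Set (m × n)), hax⟩ = θ a ∪ θ b) := by
  classical
  refine ⟨(m × n) ⊕ ((m × n) × (m × n)),
    fun z => Sum.inl '' (z : Set (m × n)) ∪
      Sum.inr '' {q : (m × n) × (m × n) |
        (q.1 ∈ (z : Set (m × n)) ∨ q.2 ∈ (z : Set (m × n))) ∧
        ¬(q.1.1 = q.2.1 ∨ q.1.2 = q.2.2)}, ?_, ?_, ?_, ?_⟩
  · -- injectivity
    intro a b hab
    have : (a : Set (m × n)) = (b : Set (m × n)) := by
      ext p
      have h1 : Sum.inl p ∈ Sum.inl '' (a : Set (m × n)) ∪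
          Sum.inr '' {q : (m × n) × (m × n) |
            (q.1 ∈ (a : Set (m × n)) ∨ q.2 ∈ (a : Set (m × n))) ∧
            ¬(q.1.1 = q.2.1 ∨ q.1.2 = q.2.2)} ↔ p ∈ (a : Set (m × n)) := by
        simp
      have h2 : Sum.inl p ∈ Sum.inl '' (b : Set (m × n)) ∪
          Sum.inr '' {q : (m × n) × (m × n) |
            (q.1 ∈ (b : Set (m × n)) ∨ q.2 ∈ (b : Set (m × n))) ∧
            ¬(q.1.1 = q.2.1 ∨ q.1.2 = q.2.2)} ↔ p ∈ (b : Set (m × n)) := by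
        simp
      have hab' : Sum.inl '' (a : Set (m × n)) ∪
          Sum.inr '' {q : (m × n) × (m × n) |
            (q.1 ∈ (a : Set (m × n)) ∨ q.2 ∈ (a : Set (m × n))) ∧
            ¬(q.1.1 = q.2.1 ∨ q.1.2 = q.2.2)} =
          Sum.inl '' (b : Set (m × n)) ∪
          Sum.inr '' {q : (m × n) × (m × n) |
            (q.1 ∈ (b : Set (m × n)) ∨ q.2 ∈ (b : Set (m × n))) ∧
            ¬(q.1.1 = q.2.1 ∨ q.1.2 = q.2.2)} := hab
      rw [← h1, hab', h2]
    exact Subtype.ext this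
  · -- zero
    intro z hz
    simp [hz]
  · -- disjointness iff
    intro a b
    constructor
    · rintro ⟨hd, hax⟩
      have hdis : ∀ p : m × n, p ∈ (a : Set (m × n)) → p ∈ (b : Set (m × n)) → False := by
        intro p h1 h2
        have hmem : p ∈ ((a : Set (m × n)) ∩ (b : Set (m × n))) := ⟨h1, h2⟩
        rw [hd] at hmem
        exact hmem
      ext x
      simp only [Set.mem_inter_iff, Set.mem_empty_iff_false, iff_false]
      rintro ⟨hxa, hxb⟩
      rcases hxa with ⟨p, hp, rfl⟩ | ⟨q, hq, rfl⟩
      · rcases hxb with ⟨p', hp', heq'⟩ | ⟨q', hq', heq'⟩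
        · cases Sum.inl.inj heq'
          exact hdis _ hp hp'
        · cases heq'
      · rcases hxb with ⟨p', hp', heq'⟩ | ⟨q', hq', heq'⟩
        · cases heq'
        · cases Sum.inr.inj heq'
          obtain ⟨hma, hnc⟩ := hq
          obtain ⟨hmb, _⟩ := hq'
          apply hnc
          rcases hma with h1 | h1 <;> rcases hmb with h2 | h2
          · exact (hdis _ h1 h2).elim
          · exact axial_coll hax (Or.inl h1) (Or.inr h2)
          · exact axial_coll hax (Or.inr h2) (Or.inl h1)
          · exact (hdis _ h1 h2).elim
    · intro hθ
      have hd : (a : Set (m × n)) ∩ (b : Set (m × n)) = ∅ := by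
        ext p
        simp only [Set.mem_inter_iff, Set.mem_empty_iff_false, iff_false]
        rintro ⟨hpa, hpb⟩
        have : Sum.inl p ∈ (∅ : Set ((m × n) ⊕ ((m × n) × (m × n)))) := by
          rw [← hθ]
          exact ⟨Or.inl ⟨p, hpa, rfl⟩, Or.inl ⟨p, hpb, rfl⟩⟩
        exact this
      refine ⟨hd, axial_union a.2 b.2 ?_⟩
      intro p hp q hq
      by_contra hnc
      have : Sum.inr (p, q) ∈ (∅ : Set ((m × n) ⊕ ((m × n) × (m × n)))) := by
        rw [← hθ]
        exact ⟨Or.inr ⟨(p, q), ⟨Or.inl hp, hnc⟩, rfl⟩,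
               Or.inr ⟨(p, q), ⟨Or.inr hq, hnc⟩, rfl⟩⟩
      exact this
  · -- union
    intro a b hd hax
    ext x
    simp only [Set.mem_union, Set.mem_image, Set.mem_setOf_eq]
    constructor
    · rintro (⟨p, hp, rfl⟩ | ⟨q, ⟨hq, hnc⟩, rfl⟩)
      · rcases hp with hp | hp
        · exact Or.inl (Or.inl ⟨p, hp, rfl⟩)
        · exact Or.inr (Or.inl ⟨p, hp, rfl⟩)
      · rcases hq with (h | h) | (h | h)
        · exact Or.inl (Or.inr ⟨q, ⟨Or.inl h, hnc⟩, rfl⟩)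
        · exact Or.inr (Or.inr ⟨q, ⟨Or.inl h, hnc⟩, rfl⟩)
        · exact Or.inl (Or.inr ⟨q, ⟨Or.inr h, hnc⟩, rfl⟩)
        · exact Or.inr (Or.inr ⟨q, ⟨Or.inr h, hnc⟩, rfl⟩)
    · rintro ((⟨p, hp, rfl⟩ | ⟨q, ⟨hq, hnc⟩, rfl⟩) | (⟨p, hp, rfl⟩ | ⟨q, ⟨hq, hnc⟩, rfl⟩))
      · exact Or.inl ⟨p, Or.inl hp, rfl⟩
      · refine Or.inr ⟨q, ⟨?_, hnc⟩, rfl⟩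
        rcases hq with h | h
        · exact Or.inl (Or.inl h)
        · exact Or.inr (Or.inl h)
      · exact Or.inl ⟨p, Or.inr hp, rfl⟩
      · refine Or.inr ⟨q, ⟨?_, hnc⟩, rfl⟩
        rcases hq with h | h
        · exact Or.inl (Or.inr h)
        · exact Or.inr (Or.inr h)
end

section
/- Let m, n be sets of cardinality greater than two and let ∼ be the smallest equivalence relation on the axial subsets of m × n with {i} × n ∼ m × {j} and {i} × (n∖{j}) ∼ (m∖{i}) × {j} for all i ∈ m, j ∈ n. Then ∼ is a partial-algebra congruence on X(m,n): if S ∼ S′ and S ∩ T = ∅ with S ∪ T axial, then S′ ∩ T = ∅, S′ ∪ T is axial, and S ∪ T ∼ S′ ∪ T. -/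
/-- The generating relation for `∼`: `{i} × n ∼ m × {j}` and
`{i} × (n∖{j}) ∼ (m∖{i}) × {j}`. -/
def genRel {m n : Type} (S S' : Set (m × n)) : Prop :=
  (∃ (i : m) (j : n), S = {i} ×ˢ (Set.univ : Set n) ∧ S' = (Set.univ : Set m) ×ˢ {j}) ∨
  (∃ (i : m) (j : n), S = {i} ×ˢ ({j}ᶜ : Set n) ∧ S' = ({i}ᶜ : Set m) ×ˢ {j})

lemma three_elems {α : Type} (h : 2 < Cardinal.mk α) (a : α) :
    ∃ b c : α, b ≠ a ∧ c ≠ a ∧ b ≠ c := by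
  classical
  by_contra hc
  push_neg at hc
  have h1 : (1 : Cardinal) < 2 := by norm_num
  have hnt : Nontrivial α := Cardinal.one_lt_iff_nontrivial.mp (h1.trans h)
  obtain ⟨b, hb⟩ := exists_ne a
  have key : ∀ c : α, c = a ∨ c = b := by
    intro c
    by_cases hca : c = a
    · exact Or.inl hca
    · exact Or.inr (hc c b hca hb)
  have hinj : Function.Injective (fun c : α => (if c = a then true else false)) := by
    intro x y hxy
    simp only at hxy
    rcases key x with hx | hx <;> rcases key y with hy | hy <;> subst hx <;> subst hy <;>
      simp_all [hb]
  have h2 := Cardinal.mk_le_of_injective hinj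
  simp [Cardinal.mk_bool] at h2
  exact absurd (lt_of_lt_of_le h h2) (lt_irrefl _)

lemma ntriv {α : Type} (h : 2 < Cardinal.mk α) : Nontrivial α :=
  Cardinal.one_lt_iff_nontrivial.mp ((by norm_num : (1:Cardinal) < 2).trans h)

def Full {m n : Type} (S : Set (m × n)) : Prop :=
  (∃ i : m, S = {i} ×ˢ (Set.univ : Set n)) ∨ (∃ j : n, S = (Set.univ : Set m) ×ˢ {j})

def ARel {m n : Type} (S S' : Set (m × n)) : Prop :=
  S = S' ∨ (Full S ∧ Full S') ∨
  (∃ (i : m) (j : n), (S = {i} ×ˢ ({j}ᶜ : Set n) ∧ S' = ({i}ᶜ : Set m) ×ˢ {j}) ∨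
    (S = ({i}ᶜ : Set m) ×ˢ {j} ∧ S' = {i} ×ˢ ({j}ᶜ : Set n)))

section lems
variable {m n : Type}

lemma pc_ne_pr (hm : 2 < Cardinal.mk m) (i i' : m) (j j' : n) :
    ({i}ᶜ : Set m) ×ˢ ({j} : Set n) ≠ {i'} ×ˢ ({j'}ᶜ : Set n) := by
  intro h
  obtain ⟨a, b, ha, hb, hab⟩ := three_elems hm i
  have h1 : (a, j) ∈ ({i}ᶜ : Set m) ×ˢ ({j} : Set n) := ⟨ha, rfl⟩
  have h2 : (b, j) ∈ ({i}ᶜ : Set m) ×ˢ ({j} : Set n) := ⟨hb, rfl⟩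
  rw [h] at h1 h2
  exact hab (h1.1.trans h2.1.symm)

lemma pc_ne_fr (hm : 2 < Cardinal.mk m) (i i' : m) (j : n) :
    ({i}ᶜ : Set m) ×ˢ ({j} : Set n) ≠ {i'} ×ˢ (Set.univ : Set n) := by
  intro h
  obtain ⟨a, b, ha, hb, hab⟩ := three_elems hm i
  have h1 : (a, j) ∈ ({i}ᶜ : Set m) ×ˢ ({j} : Set n) := ⟨ha, rfl⟩
  have h2 : (b, j) ∈ ({i}ᶜ : Set m) ×ˢ ({j} : Set n) := ⟨hb, rfl⟩
  rw [h] at h1 h2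
  exact hab (h1.1.trans h2.1.symm)

lemma pc_ne_fc (i : m) (j j' : n) :
    ({i}ᶜ : Set m) ×ˢ ({j} : Set n) ≠ (Set.univ : Set m) ×ˢ {j'} := by
  intro h
  have h1 : (i, j') ∈ (Set.univ : Set m) ×ˢ ({j'} : Set n) := ⟨trivial, rfl⟩
  rw [← h] at h1
  exact h1.1 rfl

lemma pr_ne_fr (i i' : m) (j : n) :
    ({i} : Set m) ×ˢ ({j}ᶜ : Set n) ≠ {i'} ×ˢ (Set.univ : Set n) := by
  intro h
  have h1 : (i', j) ∈ ({i'} : Set m) ×ˢ (Set.univ : Set n) := ⟨rfl, trivial⟩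
  rw [← h] at h1
  exact h1.2 rfl

lemma pr_ne_fc (hm : 2 < Cardinal.mk m) (i : m) (j j' : n) :
    ({i} : Set m) ×ˢ ({j}ᶜ : Set n) ≠ (Set.univ : Set m) ×ˢ {j'} := by
  intro h
  have hnt : Nontrivial m := ntriv hm
  obtain ⟨a, ha⟩ := exists_ne i
  have h1 : (a, j') ∈ (Set.univ : Set m) ×ˢ ({j'} : Set n) := ⟨trivial, rfl⟩
  rw [← h] at h1
  exact ha h1.1

lemma pc_inj (hm : 2 < Cardinal.mk m) {i i' : m} {j j' : n}
    (h : ({i}ᶜ : Set m) ×ˢ ({j} : Set n) = ({i'}ᶜ : Set m) ×ˢ {j'}) : i = i' ∧ j = j' := by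
  have hnt : Nontrivial m := ntriv hm
  have key : ∀ a : m, a ≠ i → a ≠ i' ∧ j = j' := by
    intro a ha
    have h1 : (a, j) ∈ ({i}ᶜ : Set m) ×ˢ ({j} : Set n) := ⟨ha, rfl⟩
    rw [h] at h1
    exact ⟨h1.1, h1.2⟩
  obtain ⟨a, ha⟩ := exists_ne i
  refine ⟨?_, (key a ha).2⟩
  by_contra hii
  exact (key i' (fun hh => hii hh.symm)).1 rfl

lemma pr_inj (hn : 2 < Cardinal.mk n) {i i' : m} {j j' : n}
    (h : ({i} : Set m) ×ˢ ({j}ᶜ : Set n) = ({i'} : Set m) ×ˢ ({j'}ᶜ : Set n)) :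
    i = i' ∧ j = j' := by
  have hnt : Nontrivial n := ntriv hn
  have key : ∀ b : n, b ≠ j → i = i' ∧ b ≠ j' := by
    intro b hb
    have h1 : (i, b) ∈ ({i} : Set m) ×ˢ ({j}ᶜ : Set n) := ⟨rfl, hb⟩
    rw [h] at h1
    exact ⟨h1.1, h1.2⟩
  obtain ⟨b, hb⟩ := exists_ne j
  refine ⟨(key b hb).1, ?_⟩
  by_contra hjj
  exact (key j' (fun hh => hjj hh.symm)).2 rfl

lemma classify (hm : 2 < Cardinal.mk m) (hn : 2 < Cardinal.mk n)
    {S S' : Set (m × n)} (h : Relation.EqvGen genRel S S') : ARel S S' := by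
  induction h with
  | rel x y hxy =>
    rcases hxy with ⟨i, j, hx, hy⟩ | ⟨i, j, hx, hy⟩
    · exact Or.inr (Or.inl ⟨Or.inl ⟨i, hx⟩, Or.inr ⟨j, hy⟩⟩)
    · exact Or.inr (Or.inr ⟨i, j, Or.inl ⟨hx, hy⟩⟩)
  | refl x => exact Or.inl rfl
  | symm x y _ ih =>
    rcases ih with h | ⟨h1, h2⟩ | ⟨i, j, ⟨h1, h2⟩ | ⟨h1, h2⟩⟩
    · exact Or.inl h.symm
    · exact Or.inr (Or.inl ⟨h2, h1⟩)
    · exact Or.inr (Or.inr ⟨i, j, Or.inr ⟨h2, h1⟩⟩)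
    · exact Or.inr (Or.inr ⟨i, j, Or.inl ⟨h2, h1⟩⟩)
  | trans x y z _ _ ih1 ih2 =>
    rcases ih1 with h | ⟨h1, h2⟩ | hp
    · rwa [h]
    · rcases ih2 with h' | ⟨h3, h4⟩ | ⟨i, j, ⟨h3, h4⟩ | ⟨h3, h4⟩⟩
      · rw [← h']; exact Or.inr (Or.inl ⟨h1, h2⟩)
      · exact Or.inr (Or.inl ⟨h1, h4⟩)
      · exfalso
        rcases h2 with ⟨i', hi'⟩ | ⟨j', hj'⟩
        · exact pr_ne_fr i i' j (hi' ▸ h3 : _).symm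
        · exact pr_ne_fc hm i j j' (hj' ▸ h3 : _).symm
      · exfalso
        rcases h2 with ⟨i', hi'⟩ | ⟨j', hj'⟩
        · exact pc_ne_fr hm i i' j (hi' ▸ h3 : _).symm
        · exact pc_ne_fc i j j' (hj' ▸ h3 : _).symm
    · obtain ⟨i, j, hp⟩ := hp
      rcases ih2 with h' | ⟨h3, h4⟩ | ⟨i', j', hp'⟩
      · rw [← h']; exact Or.inr (Or.inr ⟨i, j, hp⟩)
      · exfalso
        rcases hp with ⟨h1, h2⟩ | ⟨h1, h2⟩ <;>
          rcases h3 with ⟨i'', hi⟩ | ⟨j'', hj⟩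
        · exact pc_ne_fr hm i i'' j (h2.symm.trans hi)
        · exact pc_ne_fc i j j'' (h2.symm.trans hj)
        · exact pr_ne_fr i i'' j (h2.symm.trans hi)
        · exact pr_ne_fc hm i j j'' (h2.symm.trans hj)
      · rcases hp with ⟨h1, h2⟩ | ⟨h1, h2⟩ <;> rcases hp' with ⟨h3, h4⟩ | ⟨h3, h4⟩
        · exact absurd (h2.symm.trans h3) (pc_ne_pr hm i i' j j')
        · obtain ⟨hi, hj⟩ := pc_inj hm (h2.symm.trans h3)
          subst hi; subst hj
          exact Or.inl (h1.trans h4.symm)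
        · obtain ⟨hi, hj⟩ := pr_inj hn (h2.symm.trans h3)
          subst hi; subst hj
          exact Or.inl (h1.trans h4.symm)
        · exact absurd (h3.symm.trans h2) (pc_ne_pr hm i' i j' j)
end lems

section main
variable {m n : Type}

lemma union_pt_row (i : m) (j : n) :
    ({i} : Set m) ×ˢ ({j}ᶜ : Set n) ∪ {(i, j)} = ({i} : Set m) ×ˢ (Set.univ : Set n) := by
  ext ⟨a, b⟩
  simp only [Set.mem_union, Set.mem_prod, Set.mem_singleton_iff, Set.mem_compl_iff,
    Set.mem_univ, and_true, Prod.mk.injEq]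
  constructor
  · rintro (⟨h, _⟩ | ⟨h, _⟩) <;> exact h
  · intro h
    by_cases hb : b = j
    · exact Or.inr ⟨h, hb⟩
    · exact Or.inl ⟨h, hb⟩

lemma union_pt_col (i : m) (j : n) :
    ({i}ᶜ : Set m) ×ˢ ({j} : Set n) ∪ {(i, j)} = (Set.univ : Set m) ×ˢ ({j} : Set n) := by
  ext ⟨a, b⟩
  simp only [Set.mem_union, Set.mem_prod, Set.mem_singleton_iff, Set.mem_compl_iff,
    Set.mem_univ, true_and, Prod.mk.injEq]
  constructor
  · rintro (⟨_, h⟩ | ⟨_, h⟩) <;> exact h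
  · intro h
    by_cases ha : a = i
    · exact Or.inr ⟨ha, h⟩
    · exact Or.inl ⟨ha, h⟩

/-- for `m, n` of cardinality greater than two, the smallest equivalence
relation `∼` generated by `genRel` is a partial-algebra congruence on `X(m,n)`:
if `S ∼ S'`, `S ∩ T = ∅` and `S ∪ T` is axial, then `S' ∩ T = ∅`, `S' ∪ T` is axial,
and `S ∪ T ∼ S' ∪ T`. -/
theorem stmt_11 {m n : Type} (hm : 2 < Cardinal.mk m) (hn : 2 < Cardinal.mk n)
    (S S' T : Set (m × n)) (hS : Axial S) (hS' : Axial S') (hT : Axial T)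
    (heqv : Relation.EqvGen genRel S S')
    (hd : S ∩ T = ∅) (hax : Axial (S ∪ T)) :
    S' ∩ T = ∅ ∧ Axial (S' ∪ T) ∧ Relation.EqvGen genRel (S ∪ T) (S' ∪ T) := by
  have hntm : Nontrivial m := ntriv hm
  have hntn : Nontrivial n := ntriv hn
  have hdis : ∀ x, x ∈ S → x ∉ T := by
    intro x hx hxT
    have : x ∈ S ∩ T := ⟨hx, hxT⟩
    rw [hd] at this
    exact this
  rcases classify hm hn heqv with heq | ⟨hf, hf'⟩ | ⟨i, j, ⟨h1, h2⟩ | ⟨h1, h2⟩⟩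
  · subst heq; exact ⟨hd, hax, Relation.EqvGen.refl _⟩
  · -- S and S' both full rows/columns; show T = ∅
    have hT0 : T = ∅ := by
      rcases hf with ⟨i, hi⟩ | ⟨j, hj⟩
      · subst hi
        rcases hax with ⟨i', J, hU⟩ | ⟨I, j', hU⟩
        · obtain ⟨j0⟩ : Nonempty n := inferInstance
          have hmem : ((i, j0) : m × n) ∈ ({i'} : Set m) ×ˢ J := by
            rw [← hU]; exact Or.inl ⟨rfl, trivial⟩
          have hii : i = i' := hmem.1
          rw [Set.eq_empty_iff_forall_notMem]
          intro x hx
          have hxU : x ∈ ({i'} : Set m) ×ˢ J := by rw [← hU]; exact Or.inr hx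
          exact hdis x ⟨hxU.1.trans hii.symm, trivial⟩ hx
        · exfalso
          obtain ⟨j0, hj0⟩ := exists_ne j'
          have hmem : ((i, j0) : m × n) ∈ I ×ˢ ({j'} : Set n) := by
            rw [← hU]; exact Or.inl ⟨rfl, trivial⟩
          exact hj0 hmem.2
      · subst hj
        rcases hax with ⟨i', J, hU⟩ | ⟨I, j', hU⟩
        · exfalso
          obtain ⟨i0, hi0⟩ := exists_ne i'
          have hmem : ((i0, j) : m × n) ∈ ({i'} : Set m) ×ˢ J := by
            rw [← hU]; exact Or.inl ⟨trivial, rfl⟩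
          exact hi0 hmem.1
        · obtain ⟨i0⟩ : Nonempty m := inferInstance
          have hmem : ((i0, j) : m × n) ∈ I ×ˢ ({j'} : Set n) := by
            rw [← hU]; exact Or.inl ⟨trivial, rfl⟩
          have hjj : j = j' := hmem.2
          rw [Set.eq_empty_iff_forall_notMem]
          intro x hx
          have hxU : x ∈ I ×ˢ ({j'} : Set n) := by rw [← hU]; exact Or.inr hx
          exact hdis x ⟨trivial, hxU.2.trans hjj.symm⟩ hx
    subst hT0
    simp only [Set.inter_empty, Set.union_empty]
    exact ⟨trivial, hS', heqv⟩
  · -- S = {i} ×ˢ {j}ᶜ, S' = {i}ᶜ ×ˢ {j}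
    have hTsub : T ⊆ {((i, j) : m × n)} := by
      rcases hax with ⟨i', J, hU⟩ | ⟨I, j', hU⟩
      · obtain ⟨b, hb⟩ := exists_ne j
        have hmem : ((i, b) : m × n) ∈ ({i'} : Set m) ×ˢ J := by
          rw [← hU]; exact Or.inl (by rw [h1]; exact ⟨rfl, hb⟩)
        have hii : i = i' := hmem.1
        intro x hx
        have hxU : x ∈ ({i'} : Set m) ×ˢ J := by rw [← hU]; exact Or.inr hx
        have hx1 : x.1 = i := hxU.1.trans hii.symm
        have hx2 : x.2 = j := by
          by_contra hc
          exact hdis x (by rw [h1]; exact ⟨hx1, hc⟩) hx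
        show x ∈ ({((i, j) : m × n)} : Set (m × n))
        rw [Set.mem_singleton_iff]
        exact Prod.ext hx1 hx2
      · exfalso
        obtain ⟨b, c, hb, hc, hbc⟩ := three_elems hn j
        have hmb : ((i, b) : m × n) ∈ I ×ˢ ({j'} : Set n) := by
          rw [← hU]; exact Or.inl (by rw [h1]; exact ⟨rfl, hb⟩)
        have hmc : ((i, c) : m × n) ∈ I ×ˢ ({j'} : Set n) := by
          rw [← hU]; exact Or.inl (by rw [h1]; exact ⟨rfl, hc⟩)
        exact hbc (hmb.2.trans hmc.2.symm)
    rcases Set.subset_singleton_iff_eq.mp hTsub with hT0 | hT1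
    · subst hT0
      simp only [Set.inter_empty, Set.union_empty]
      exact ⟨trivial, hS', heqv⟩
    · subst hT1
      refine ⟨?_, ?_, ?_⟩
      · rw [Set.eq_empty_iff_forall_notMem]
        rintro x ⟨hx1, hx2⟩
        rw [Set.mem_singleton_iff] at hx2
        subst hx2
        rw [h2] at hx1
        exact hx1.1 rfl
      · rw [h2, union_pt_col]
        exact Or.inr ⟨Set.univ, j, rfl⟩
      · rw [h1, h2, union_pt_row, union_pt_col]
        exact Relation.EqvGen.rel _ _ (Or.inl ⟨i, j, rfl, rfl⟩)
  · -- S = {i}ᶜ ×ˢ {j}, S' = {i} ×ˢ {j}ᶜ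
    have hTsub : T ⊆ {((i, j) : m × n)} := by
      rcases hax with ⟨i', J, hU⟩ | ⟨I, j', hU⟩
      · exfalso
        obtain ⟨b, c, hb, hc, hbc⟩ := three_elems hm i
        have hmb : ((b, j) : m × n) ∈ ({i'} : Set m) ×ˢ J := by
          rw [← hU]; exact Or.inl (by rw [h1]; exact ⟨hb, rfl⟩)
        have hmc : ((c, j) : m × n) ∈ ({i'} : Set m) ×ˢ J := by
          rw [← hU]; exact Or.inl (by rw [h1]; exact ⟨hc, rfl⟩)
        exact hbc (hmb.1.trans hmc.1.symm)
      · obtain ⟨a, ha⟩ := exists_ne i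
        have hmem : ((a, j) : m × n) ∈ I ×ˢ ({j'} : Set n) := by
          rw [← hU]; exact Or.inl (by rw [h1]; exact ⟨ha, rfl⟩)
        have hjj : j = j' := hmem.2
        intro x hx
        have hxU : x ∈ I ×ˢ ({j'} : Set n) := by rw [← hU]; exact Or.inr hx
        have hx2 : x.2 = j := hxU.2.trans hjj.symm
        have hx1 : x.1 = i := by
          by_contra hc
          exact hdis x (by rw [h1]; exact ⟨hc, hx2⟩) hx
        show x ∈ ({((i, j) : m × n)} : Set (m × n))
        rw [Set.mem_singleton_iff]
        exact Prod.ext hx1 hx2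
    rcases Set.subset_singleton_iff_eq.mp hTsub with hT0 | hT1
    · subst hT0
      simp only [Set.inter_empty, Set.union_empty]
      exact ⟨trivial, hS', heqv⟩
    · subst hT1
      refine ⟨?_, ?_, ?_⟩
      · rw [Set.eq_empty_iff_forall_notMem]
        rintro x ⟨hx1, hx2⟩
        rw [Set.mem_singleton_iff] at hx2
        subst hx2
        rw [h2] at hx1
        exact hx1.2 rfl
      · rw [h2, union_pt_row]
        exact Or.inl ⟨i, Set.univ, rfl⟩
      · rw [h1, h2, union_pt_row, union_pt_col]
        exact Relation.EqvGen.symm _ _ (Relation.EqvGen.rel _ _ (Or.inl ⟨i, j, rfl, rfl⟩))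
end main
end

section
/- Let m, n have cardinality greater than two. If the quotient partial algebra A(m,n) has a ≲-complete (∪•, ∅)-representation, then |m| = |n|. Specifically, from a point x in the representation of the top element 1, the relation R = {(i,j) : x ∈ θ([{(i,j)}])} is a bijection between m and n. -/
/-- The congruence `∼`. -/
def eqv {m n : Type} (S S' : Set (m × n)) : Prop := Relation.EqvGen genRel S S'

/-- `[S] ⊔• [T]` is defined in the quotient `A(m,n)`, expressed via representatives. -/
def qDefined {m n : Type} (S T : Set (m × n)) : Prop :=
  ∃ S' T', Axial S' ∧ Axial T' ∧ eqv S S' ∧ eqv T T' ∧ S' ∩ T' = ∅ ∧ Axial (S' ∪ T')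

/-- The order `≲` on the quotient `A(m,n)`, expressed via representatives. -/
def qLesim {m n : Type} (S T : Set (m × n)) : Prop :=
  eqv S T ∨ ∃ S' C, Axial S' ∧ Axial C ∧ eqv S S' ∧ S' ∩ C = ∅ ∧
    Axial (S' ∪ C) ∧ eqv (S' ∪ C) T

/-- at least 3 elements -/
def Big3 (α : Type) : Prop := ∀ x y : α, ∃ z, z ≠ x ∧ z ≠ y

theorem big3_of_card {α : Type} (h : 2 < Cardinal.mk α) : Big3 α := by
  intro x y
  have h3 : 3 ≤ Cardinal.mk α := by
    have : ((2:ℕ):Cardinal) < Cardinal.mk α := by exact_mod_cast h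
    have := Order.succ_le_of_lt this
    rwa [← Cardinal.nat_succ] at this
  exact Cardinal.three_le h3 x y

section Forms
variable {m n : Type}

theorem memp {s : Set m} {t : Set n} {a : m} {b : n} : (a, b) ∈ s ×ˢ t ↔ a ∈ s ∧ b ∈ t :=
  Set.mem_prod

def isTop (S : Set (m × n)) : Prop :=
  (∃ i : m, S = {i} ×ˢ (Set.univ : Set n)) ∨ (∃ j : n, S = (Set.univ : Set m) ×ˢ {j})

def E (S T : Set (m × n)) : Prop :=
  S = T ∨ (isTop S ∧ isTop T) ∨
  (∃ (i : m) (j : n), (S = {i} ×ˢ ({j}ᶜ : Set n) ∧ T = ({i}ᶜ : Set m) ×ˢ {j}) ∨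
    (S = ({i}ᶜ : Set m) ×ˢ {j} ∧ T = {i} ×ˢ ({j}ᶜ : Set n)))

theorem pairL_ne_rowTop (bn : Big3 n) (i i' : m) (j : n) :
    ({i} ×ˢ ({j}ᶜ : Set n) : Set (m × n)) ≠ {i'} ×ˢ (Set.univ : Set n) := by
  intro h
  obtain ⟨j', hj', -⟩ := bn j j
  rw [Set.ext_iff] at h
  have h1 := (h (i, j')).1 (memp.2 ⟨rfl, hj'⟩)
  have h2 := (h (i, j)).2 (memp.2 ⟨(memp.1 h1).1, trivial⟩)
  exact (memp.1 h2).2 rfl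

theorem pairL_ne_colTop (bm : Big3 m) (i : m) (j j' : n) :
    ({i} ×ˢ ({j}ᶜ : Set n) : Set (m × n)) ≠ (Set.univ : Set m) ×ˢ {j'} := by
  intro h
  obtain ⟨i', hi', -⟩ := bm i i
  rw [Set.ext_iff] at h
  have := (h (i', j')).2 (memp.2 ⟨trivial, rfl⟩)
  exact hi' (memp.1 this).1

theorem pairL_ne_pairR (bm : Big3 m) (i i' : m) (j j' : n) :
    ({i} ×ˢ ({j}ᶜ : Set n) : Set (m × n)) ≠ ({i'}ᶜ : Set m) ×ˢ {j'} := by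
  intro h
  obtain ⟨i'', hi''1, hi''2⟩ := bm i i'
  rw [Set.ext_iff] at h
  have := (h (i'', j')).2 (memp.2 ⟨hi''2, rfl⟩)
  exact hi''1 (memp.1 this).1

theorem pairL_inj (bn : Big3 n) {i i' : m} {j j' : n}
    (h : ({i} ×ˢ ({j}ᶜ : Set n) : Set (m × n)) = {i'} ×ˢ ({j'}ᶜ : Set n)) :
    i = i' ∧ j = j' := by
  obtain ⟨j₀, hj₀, -⟩ := bn j j
  rw [Set.ext_iff] at h
  have h1 := memp.1 ((h (i, j₀)).1 (memp.2 ⟨rfl, hj₀⟩))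
  refine ⟨h1.1, ?_⟩
  by_contra hjj
  have := (h (i, j)).2 (memp.2 ⟨h1.1, fun hc => hjj (hc : j = j')⟩)
  exact (memp.1 this).2 rfl

theorem pairR_ne_rowTop (bm : Big3 m) (i i' : m) (j : n) :
    (({i}ᶜ : Set m) ×ˢ {j} : Set (m × n)) ≠ {i'} ×ˢ (Set.univ : Set n) := by
  intro h
  obtain ⟨i'', hi''1, hi''2⟩ := bm i i'
  rw [Set.ext_iff] at h
  have := (h (i'', j)).1 (memp.2 ⟨hi''1, rfl⟩)
  exact hi''2 (memp.1 this).1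

theorem pairR_ne_colTop (i : m) (j j' : n) :
    (({i}ᶜ : Set m) ×ˢ {j} : Set (m × n)) ≠ (Set.univ : Set m) ×ˢ {j'} := by
  intro h
  rw [Set.ext_iff] at h
  have := (h (i, j')).2 (memp.2 ⟨trivial, rfl⟩)
  exact (memp.1 this).1 rfl

theorem pairR_inj (bm : Big3 m) {i i' : m} {j j' : n}
    (h : (({i}ᶜ : Set m) ×ˢ {j} : Set (m × n)) = ({i'}ᶜ : Set m) ×ˢ {j'}) :
    i = i' ∧ j = j' := by
  obtain ⟨i₀, hi₀, -⟩ := bm i i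
  rw [Set.ext_iff] at h
  have h1 := memp.1 ((h (i₀, j)).1 (memp.2 ⟨hi₀, rfl⟩))
  refine ⟨?_, h1.2⟩
  by_contra hii
  have := (h (i, j)).2 (memp.2 ⟨fun hc => hii (hc : i = i'), h1.2 ▸ rfl⟩)
  exact (memp.1 this).1 rfl

theorem notTop_pairL (bm : Big3 m) (bn : Big3 n) (i : m) (j : n) :
    ¬ isTop ({i} ×ˢ ({j}ᶜ : Set n) : Set (m × n)) := by
  rintro (⟨i', h⟩ | ⟨j', h⟩)
  · exact pairL_ne_rowTop bn i i' j h
  · exact pairL_ne_colTop bm i j j' h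

theorem notTop_pairR (bm : Big3 m) (i : m) (j : n) :
    ¬ isTop (({i}ᶜ : Set m) ×ˢ {j} : Set (m × n)) := by
  rintro (⟨i', h⟩ | ⟨j', h⟩)
  · exact pairR_ne_rowTop bm i i' j h
  · exact pairR_ne_colTop i j j' h

end Forms

section Equiv
variable {m n : Type}

theorem E_refl (S : Set (m × n)) : E S S := Or.inl rfl

theorem E_symm {S T : Set (m × n)} (h : E S T) : E T S := by
  rcases h with h | h | ⟨i, j, h | h⟩
  · exact Or.inl h.symm
  · exact Or.inr (Or.inl ⟨h.2, h.1⟩)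
  · exact Or.inr (Or.inr ⟨i, j, Or.inr ⟨h.2, h.1⟩⟩)
  · exact Or.inr (Or.inr ⟨i, j, Or.inl ⟨h.2, h.1⟩⟩)

theorem E_trans (bm : Big3 m) (bn : Big3 n) {S T U : Set (m × n)}
    (h1 : E S T) (h2 : E T U) : E S U := by
  rcases h1 with h1 | h1 | ⟨i, j, h1 | h1⟩
  · exact h1 ▸ h2
  · rcases h2 with h2 | h2 | ⟨a, c, h2 | h2⟩
    · exact h2 ▸ Or.inr (Or.inl h1)
    · exact Or.inr (Or.inl ⟨h1.1, h2.2⟩)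
    · exact absurd (h2.1 ▸ h1.2) (notTop_pairL bm bn a c)
    · exact absurd (h2.1 ▸ h1.2) (notTop_pairR bm a c)
  · -- S = {i}×{j}ᶜ, T = {i}ᶜ×{j}
    rcases h2 with h2 | h2 | ⟨a, c, h2 | h2⟩
    · exact Or.inr (Or.inr ⟨i, j, Or.inl ⟨h1.1, h2 ▸ h1.2⟩⟩)
    · exact absurd (h1.2 ▸ h2.1) (notTop_pairR bm i j)
    · exact absurd (h1.2.symm.trans h2.1).symm (pairL_ne_pairR bm a i c j)
    · obtain ⟨hi, hj⟩ := pairR_inj bm (h1.2.symm.trans h2.1)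
      exact Or.inl (h1.1.trans (hi ▸ hj ▸ h2.2.symm))
  · -- S = {i}ᶜ×{j}, T = {i}×{j}ᶜ
    rcases h2 with h2 | h2 | ⟨a, c, h2 | h2⟩
    · exact Or.inr (Or.inr ⟨i, j, Or.inr ⟨h1.1, h2 ▸ h1.2⟩⟩)
    · exact absurd (h1.2 ▸ h2.1) (notTop_pairL bm bn i j)
    · obtain ⟨hi, hj⟩ := pairL_inj bn (h1.2.symm.trans h2.1)
      exact Or.inl (h1.1.trans (hi ▸ hj ▸ h2.2.symm))
    · exact absurd (h1.2.symm.trans h2.1) (pairL_ne_pairR bm i a j c)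

theorem genRel_to_E {S T : Set (m × n)} (h : genRel S T) : E S T := by
  rcases h with ⟨i, j, h1, h2⟩ | ⟨i, j, h1, h2⟩
  · exact Or.inr (Or.inl ⟨Or.inl ⟨i, h1⟩, Or.inr ⟨j, h2⟩⟩)
  · exact Or.inr (Or.inr ⟨i, j, Or.inl ⟨h1, h2⟩⟩)

theorem eqv_to_E (bm : Big3 m) (bn : Big3 n) {S T : Set (m × n)} (h : eqv S T) : E S T := by
  induction h with
  | rel _ _ h => exact genRel_to_E h
  | refl _ => exact E_refl _
  | symm _ _ _ ih => exact E_symm ih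
  | trans _ _ _ _ _ ih1 ih2 => exact E_trans bm bn ih1 ih2

theorem eqv_of_top {S T : Set (m × n)} [Nonempty m] [Nonempty n]
    (hS : isTop S) (hT : isTop T) : eqv S T := by
  obtain ⟨j₀⟩ := ‹Nonempty n›
  obtain ⟨i₀⟩ := ‹Nonempty m›
  have key : ∀ U : Set (m × n), isTop U → eqv U ((Set.univ : Set m) ×ˢ {j₀}) := by
    rintro U (⟨i, rfl⟩ | ⟨j, rfl⟩)
    · exact Relation.EqvGen.rel _ _ (Or.inl ⟨i, j₀, rfl, rfl⟩)
    · refine Relation.EqvGen.trans _ _ _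
        (Relation.EqvGen.symm _ _ (Relation.EqvGen.rel _ _ (Or.inl ⟨i₀, j, rfl, rfl⟩)))
        (Relation.EqvGen.rel _ _ (Or.inl ⟨i₀, j₀, rfl, rfl⟩))
  exact Relation.EqvGen.trans _ _ _ (key S hS) (Relation.EqvGen.symm _ _ (key T hT))

theorem E_to_eqv [Nonempty m] [Nonempty n] {S T : Set (m × n)} (h : E S T) : eqv S T := by
  rcases h with rfl | h | ⟨i, j, ⟨rfl, rfl⟩ | ⟨rfl, rfl⟩⟩
  · exact Relation.EqvGen.refl _
  · exact eqv_of_top h.1 h.2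
  · exact Relation.EqvGen.rel _ _ (Or.inr ⟨i, j, rfl, rfl⟩)
  · exact Relation.EqvGen.symm _ _ (Relation.EqvGen.rel _ _ (Or.inr ⟨i, j, rfl, rfl⟩))

-- singleton isolation
theorem sing_ne_rowTop (bn : Big3 n) (i i' : m) (j : n) :
    ({(i, j)} : Set (m × n)) ≠ {i'} ×ˢ (Set.univ : Set n) := by
  intro h
  obtain ⟨j₀, hj₀, -⟩ := bn j j
  rw [Set.ext_iff] at h
  have := (h (i', j₀)).2 (memp.2 ⟨rfl, trivial⟩)
  rw [Set.mem_singleton_iff, Prod.ext_iff] at this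
  exact hj₀ this.2

theorem sing_ne_colTop (bm : Big3 m) (i : m) (j j' : n) :
    ({(i, j)} : Set (m × n)) ≠ (Set.univ : Set m) ×ˢ {j'} := by
  intro h
  obtain ⟨i₀, hi₀, -⟩ := bm i i
  rw [Set.ext_iff] at h
  have := (h (i₀, j')).2 (memp.2 ⟨trivial, rfl⟩)
  rw [Set.mem_singleton_iff, Prod.ext_iff] at this
  exact hi₀ this.1

theorem sing_ne_pairL (bn : Big3 n) (i a : m) (j c : n) :
    ({(i, j)} : Set (m × n)) ≠ {a} ×ˢ ({c}ᶜ : Set n) := by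
  intro h
  obtain ⟨j₀, hj₀1, hj₀2⟩ := bn j c
  rw [Set.ext_iff] at h
  have := (h (a, j₀)).2 (memp.2 ⟨rfl, hj₀2⟩)
  rw [Set.mem_singleton_iff, Prod.ext_iff] at this
  exact hj₀1 this.2

theorem sing_ne_pairR (bm : Big3 m) (i a : m) (j c : n) :
    ({(i, j)} : Set (m × n)) ≠ ({a}ᶜ : Set m) ×ˢ {c} := by
  intro h
  obtain ⟨i₀, hi₀1, hi₀2⟩ := bm i a
  rw [Set.ext_iff] at h
  have := (h (i₀, c)).2 (memp.2 ⟨hi₀2, rfl⟩)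
  rw [Set.mem_singleton_iff, Prod.ext_iff] at this
  exact hi₀1 this.1

theorem E_sing (bm : Big3 m) (bn : Big3 n) {i : m} {j : n} {T : Set (m × n)}
    (h : E ({(i, j)} : Set (m × n)) T) : T = {(i, j)} := by
  rcases h with rfl | ⟨h, -⟩ | ⟨a, c, ⟨h, -⟩ | ⟨h, -⟩⟩
  · rfl
  · rcases h with ⟨i', h⟩ | ⟨j', h⟩
    · exact absurd h (sing_ne_rowTop bn i i' j)
    · exact absurd h (sing_ne_colTop bm i j j')
  · exact absurd h (sing_ne_pairL bn i a j c)
  · exact absurd h (sing_ne_pairR bm i a j c)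

end Equiv

section Sup
variable {m n : Type}

theorem row_sup [Nonempty n] (bm : Big3 m) (bn : Big3 n) {i : m} {b : Set (m × n)}
    (hb : Axial b)
    (h : ∀ j : n, ∃ D : Set (m × n), (i, j) ∈ D ∧ E D b) : isTop b := by
  by_contra hnot
  have h' : ∀ j : n, (i, j) ∈ b ∨
      (∃ (a : m) (c : n), i = a ∧ j ≠ c ∧ b = ({a}ᶜ : Set m) ×ˢ {c}) ∨
      (∃ (a : m) (c : n), i ≠ a ∧ j = c ∧ b = {a} ×ˢ ({c}ᶜ : Set n)) := by
    intro j
    obtain ⟨D, hmem, hE⟩ := h j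
    rcases hE with rfl | ⟨-, hT⟩ | ⟨a, c, ⟨rfl, hbe⟩ | ⟨rfl, hbe⟩⟩
    · exact Or.inl hmem
    · exact absurd hT hnot
    · have := memp.1 hmem
      exact Or.inr (Or.inl ⟨a, c, this.1, this.2, hbe⟩)
    · have := memp.1 hmem
      exact Or.inr (Or.inr ⟨a, c, this.1, this.2, hbe⟩)
  by_cases hall : ∀ j : n, (i, j) ∈ b
  · rcases hb with ⟨i', J, rfl⟩ | ⟨I, j', rfl⟩
    · obtain ⟨j₀⟩ := ‹Nonempty n›
      have hii' : i = i' := (memp.1 (hall j₀)).1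
      have hJ : J = Set.univ := by
        ext j
        exact ⟨fun _ => trivial, fun _ => (memp.1 (hall j)).2⟩
      exact hnot (Or.inl ⟨i', by rw [hJ]⟩)
    · obtain ⟨j₀, hj₀, -⟩ := bn j' j'
      exact hj₀ (memp.1 (hall j₀)).2
  · push_neg at hall
    obtain ⟨j₁, hj₁⟩ := hall
    rcases h' j₁ with hc | ⟨a, c, rfl, hj₁c, rfl⟩ | ⟨a, c, hia, hj₁c, rfl⟩
    · exact hj₁ hc
    · -- case A : b = {i}ᶜ ×ˢ {c}, consider j = c
      rcases h' c with hc | ⟨a', c', -, hcc', hbe⟩ | ⟨a', c', -, -, hbe⟩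
      · exact (memp.1 hc).1 rfl
      · exact hcc' (pairR_inj bm hbe).2
      · exact pairL_ne_pairR bm a' i c' c hbe.symm
    · -- case B : b = {a} ×ˢ {c}ᶜ with i ≠ a, consider j ≠ c
      obtain ⟨j₂, hj₂, -⟩ := bn c c
      rcases h' j₂ with hc | ⟨a', c', -, -, hbe⟩ | ⟨a', c', -, hj₂c', hbe⟩
      · exact hia (memp.1 hc).1
      · exact pairL_ne_pairR bm a a' c c' hbe
      · exact hj₂ (hj₂c'.trans (pairL_inj bn hbe.symm).2)

theorem col_sup [Nonempty m] (bm : Big3 m) (bn : Big3 n) {j : n} {b : Set (m × n)}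
    (hb : Axial b)
    (h : ∀ i : m, ∃ D : Set (m × n), (i, j) ∈ D ∧ E D b) : isTop b := by
  by_contra hnot
  have h' : ∀ i : m, (i, j) ∈ b ∨
      (∃ (a : m) (c : n), i = a ∧ j ≠ c ∧ b = ({a}ᶜ : Set m) ×ˢ {c}) ∨
      (∃ (a : m) (c : n), i ≠ a ∧ j = c ∧ b = {a} ×ˢ ({c}ᶜ : Set n)) := by
    intro i
    obtain ⟨D, hmem, hE⟩ := h i
    rcases hE with rfl | ⟨-, hT⟩ | ⟨a, c, ⟨rfl, hbe⟩ | ⟨rfl, hbe⟩⟩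
    · exact Or.inl hmem
    · exact absurd hT hnot
    · have := memp.1 hmem
      exact Or.inr (Or.inl ⟨a, c, this.1, this.2, hbe⟩)
    · have := memp.1 hmem
      exact Or.inr (Or.inr ⟨a, c, this.1, this.2, hbe⟩)
  by_cases hall : ∀ i : m, (i, j) ∈ b
  · rcases hb with ⟨i', J, rfl⟩ | ⟨I, j', rfl⟩
    · obtain ⟨i₀, hi₀, -⟩ := bm i' i'
      exact hi₀ (memp.1 (hall i₀)).1
    · obtain ⟨i₀⟩ := ‹Nonempty m›
      have hI : I = Set.univ := by
        ext i
        exact ⟨fun _ => trivial, fun _ => (memp.1 (hall i)).1⟩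
      exact hnot (Or.inr ⟨j', by rw [hI]⟩)
  · push_neg at hall
    obtain ⟨i₁, hi₁⟩ := hall
    rcases h' i₁ with hc | ⟨a, c, hi₁a, hjc, rfl⟩ | ⟨a, c, hi₁a, rfl, rfl⟩
    · exact hi₁ hc
    · -- case A' : b = {a}ᶜ ×ˢ {c} with j ≠ c, consider i ≠ a
      obtain ⟨i₂, hi₂, -⟩ := bm a a
      rcases h' i₂ with hc | ⟨a', c', hi₂a', -, hbe⟩ | ⟨a', c', -, -, hbe⟩
      · exact hjc (memp.1 hc).2
      · exact hi₂ (hi₂a'.trans (pairR_inj bm hbe).1.symm)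
      · exact pairL_ne_pairR bm a' a c' c hbe.symm
    · -- case B' : b = {a} ×ˢ {j}ᶜ with i₁ ≠ a, consider i = a
      rcases h' a with hc | ⟨a', c', -, -, hbe⟩ | ⟨a', c', haa', -, hbe⟩
      · exact (memp.1 hc).2 rfl
      · exact pairL_ne_pairR bm a a' j c' hbe
      · exact haa' (pairL_inj bn hbe.symm).1.symm
end Sup

section Main
variable {m n : Type}

theorem axial_sing (i : m) (j : n) : Axial ({(i, j)} : Set (m × n)) :=
  Or.inl ⟨i, {j}, Set.singleton_prod_singleton.symm⟩

theorem axial_row (i : m) : Axial ({i} ×ˢ (Set.univ : Set n) : Set (m × n)) :=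
  Or.inl ⟨i, Set.univ, rfl⟩

theorem axial_col (j : n) : Axial ((Set.univ : Set m) ×ˢ {j} : Set (m × n)) :=
  Or.inr ⟨Set.univ, j, rfl⟩

theorem sing_disj_row (i : m) {j j' : n} (h : j ≠ j') :
    ({(i, j)} : Set (m × n)) ∩ {(i, j')} = ∅ := by
  rw [Set.singleton_inter_eq_empty, Set.mem_singleton_iff]
  intro hc
  exact h (congrArg Prod.snd hc)

theorem sing_disj_col {i i' : m} (j : n) (h : i ≠ i') :
    ({(i, j)} : Set (m × n)) ∩ {(i', j)} = ∅ := by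
  rw [Set.singleton_inter_eq_empty, Set.mem_singleton_iff]
  intro hc
  exact h (congrArg Prod.fst hc)

theorem sing_union_row (i : m) (j j' : n) :
    ({(i, j)} : Set (m × n)) ∪ {(i, j')} = {i} ×ˢ ({j} ∪ {j'} : Set n) := by
  rw [Set.prod_union, Set.singleton_prod_singleton, Set.singleton_prod_singleton]

theorem sing_union_col (i i' : m) (j : n) :
    ({(i, j)} : Set (m × n)) ∪ {(i', j)} = ({i} ∪ {i'} : Set m) ×ˢ {j} := by
  rw [Set.union_prod, Set.singleton_prod_singleton, Set.singleton_prod_singleton]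

theorem qDefined_sing_row (i : m) {j j' : n} (h : j ≠ j') :
    qDefined ({(i, j)} : Set (m × n)) {(i, j')} :=
  ⟨{(i, j)}, {(i, j')}, axial_sing i j, axial_sing i j', Relation.EqvGen.refl _,
    Relation.EqvGen.refl _, sing_disj_row i h,
    by rw [sing_union_row]; exact Or.inl ⟨i, _, rfl⟩⟩

theorem qDefined_sing_col {i i' : m} (j : n) (h : i ≠ i') :
    qDefined ({(i, j)} : Set (m × n)) {(i', j)} :=
  ⟨{(i, j)}, {(i', j)}, axial_sing i j, axial_sing i' j, Relation.EqvGen.refl _,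
    Relation.EqvGen.refl _, sing_disj_col j h,
    by rw [sing_union_col]; exact Or.inr ⟨_, j, rfl⟩⟩

theorem qLesim_sing_row (i : m) (j : n) :
    qLesim ({(i, j)} : Set (m × n)) ({i} ×ˢ (Set.univ : Set n)) := by
  refine Or.inr ⟨{(i, j)}, {i} ×ˢ ({j}ᶜ : Set n), axial_sing i j, Or.inl ⟨i, _, rfl⟩,
    Relation.EqvGen.refl _, ?_, ?_, ?_⟩
  · rw [← Set.singleton_prod_singleton, Set.prod_inter_prod]
    simp
  · rw [← Set.singleton_prod_singleton, ← Set.prod_union, Set.union_compl_self]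
    exact Or.inl ⟨i, _, rfl⟩
  · rw [← Set.singleton_prod_singleton, ← Set.prod_union, Set.union_compl_self]
    exact Relation.EqvGen.refl _

theorem qLesim_sing_col (i : m) (j : n) :
    qLesim ({(i, j)} : Set (m × n)) ((Set.univ : Set m) ×ˢ {j}) := by
  refine Or.inr ⟨{(i, j)}, ({i}ᶜ : Set m) ×ˢ {j}, axial_sing i j, Or.inr ⟨_, j, rfl⟩,
    Relation.EqvGen.refl _, ?_, ?_, ?_⟩
  · rw [← Set.singleton_prod_singleton, Set.prod_inter_prod]
    simp
  · rw [← Set.singleton_prod_singleton, ← Set.union_prod, Set.union_compl_self]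
    exact Or.inr ⟨_, j, rfl⟩
  · rw [← Set.singleton_prod_singleton, ← Set.union_prod, Set.union_compl_self]
    exact Relation.EqvGen.refl _

/-- From `qLesim {(i,j)} b` extract an axial-free witness. -/
theorem qLesim_sing_extract (bm : Big3 m) (bn : Big3 n) {i : m} {j : n} {b : Set (m × n)}
    (h : qLesim ({(i, j)} : Set (m × n)) b) :
    ∃ D : Set (m × n), (i, j) ∈ D ∧ E D b := by
  rcases h with h | ⟨S', C, hS'ax, hCax, heq, hdisj, hUax, hequ⟩
  · exact ⟨{(i, j)}, rfl, eqv_to_E bm bn h⟩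
  · have hS' : S' = {(i, j)} := E_sing bm bn (eqv_to_E bm bn heq)
    exact ⟨S' ∪ C, hS' ▸ Or.inl rfl, eqv_to_E bm bn hequ⟩

end Main


/-- for `m, n` of cardinality greater than two, if the quotient partial
algebra `A(m,n)` has a `≲`-complete `(∪•, ∅)`-representation `θ`, then `|m| = |n|`;
specifically, for any point `x` in the representation of the top element `1` (the class
of `{i₀} × n`), the relation `R = {(i,j) : x ∈ θ([{(i,j)}])}` is a bijection between
`m` and `n`. -/
theorem stmt_13 {m n : Type} (hm : 2 < Cardinal.mk m) (hn : 2 < Cardinal.mk n)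
    (X : Type) (θ : Set (m × n) → Set X)
    (hfaith : ∀ S T : Set (m × n), Axial S → Axial T → (eqv S T ↔ θ S = θ T))
    (hzero : θ (∅ : Set (m × n)) = ∅)
    (hdef : ∀ S T : Set (m × n), Axial S → Axial T → (qDefined S T ↔ θ S ∩ θ T = ∅))
    (hop : ∀ S T : Set (m × n), Axial S → Axial T → S ∩ T = ∅ → Axial (S ∪ T) →
      θ (S ∪ T) = θ S ∪ θ T)
    (hcomp : ∀ 𝒮 : Set (Set (m × n)), (∀ S ∈ 𝒮, Axial S) →
      (∀ S ∈ 𝒮, ∀ T ∈ 𝒮, ¬ eqv S T → qDefined S T) →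
      ∀ a : Set (m × n), Axial a → (∀ S ∈ 𝒮, qLesim S a) →
        (∀ b : Set (m × n), Axial b → (∀ S ∈ 𝒮, qLesim S b) → qLesim a b) →
        θ a = ⋃ S ∈ 𝒮, θ S) :
    Nonempty (m ≃ n) ∧
    ∀ (i₀ : m) (x : X), x ∈ θ ({i₀} ×ˢ (Set.univ : Set n)) →
      (∀ i : m, ∃! j : n, x ∈ θ ({(i, j)} : Set (m × n))) ∧
      (∀ j : n, ∃! i : m, x ∈ θ ({(i, j)} : Set (m × n))) := by
  have bm : Big3 m := big3_of_card hm
  have bn : Big3 n := big3_of_card hn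
  have hmne : Nonempty m := by
    rw [← Cardinal.mk_ne_zero_iff]; positivity
  have hnne : Nonempty n := by
    rw [← Cardinal.mk_ne_zero_iff]; positivity
  -- θ of the row i equals the union over j of the singletons
  have hrowU : ∀ i : m, θ ({i} ×ˢ (Set.univ : Set n)) = ⋃ j : n, θ {(i, j)} := by
    intro i
    have := hcomp (Set.range fun j : n => ({(i, j)} : Set (m × n)))
      (by rintro S ⟨j, rfl⟩; exact axial_sing i j)
      (by
        rintro S ⟨j, rfl⟩ T ⟨j', rfl⟩ hne
        rcases eq_or_ne j j' with rfl | hjj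
        · exact absurd (Relation.EqvGen.refl _) hne
        · exact qDefined_sing_row i hjj)
      ({i} ×ˢ (Set.univ : Set n)) (axial_row i)
      (by rintro S ⟨j, rfl⟩; exact qLesim_sing_row i j)
      (by
        intro b hbax hball
        have htop : isTop b := row_sup bm bn hbax (fun j =>
          qLesim_sing_extract bm bn (hball _ ⟨j, rfl⟩))
        exact Or.inl (eqv_of_top (Or.inl ⟨i, rfl⟩) htop))
    rw [this, Set.biUnion_range]
  have hcolU : ∀ j : n, θ ((Set.univ : Set m) ×ˢ {j}) = ⋃ i : m, θ {(i, j)} := by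
    intro j
    have := hcomp (Set.range fun i : m => ({(i, j)} : Set (m × n)))
      (by rintro S ⟨i, rfl⟩; exact axial_sing i j)
      (by
        rintro S ⟨i, rfl⟩ T ⟨i', rfl⟩ hne
        rcases eq_or_ne i i' with rfl | hii
        · exact absurd (Relation.EqvGen.refl _) hne
        · exact qDefined_sing_col j hii)
      ((Set.univ : Set m) ×ˢ {j}) (axial_col j)
      (by rintro S ⟨i, rfl⟩; exact qLesim_sing_col i j)
      (by
        intro b hbax hball
        have htop : isTop b := col_sup bm bn hbax (fun i =>
          qLesim_sing_extract bm bn (hball _ ⟨i, rfl⟩))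
        exact Or.inl (eqv_of_top (Or.inr ⟨j, rfl⟩) htop))
    rw [this, Set.biUnion_range]
  -- all rows and columns have the same image under θ
  have hrowEq : ∀ i i' : m, θ ({i} ×ˢ (Set.univ : Set n)) = θ ({i'} ×ˢ (Set.univ : Set n)) :=
    fun i i' => (hfaith _ _ (axial_row i) (axial_row i')).1
      (eqv_of_top (Or.inl ⟨i, rfl⟩) (Or.inl ⟨i', rfl⟩))
  have hcolEq : ∀ (i : m) (j : n), θ ((Set.univ : Set m) ×ˢ {j}) = θ ({i} ×ˢ (Set.univ : Set n)) :=
    fun i j => (hfaith _ _ (axial_col j) (axial_row i)).1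
      (eqv_of_top (Or.inr ⟨j, rfl⟩) (Or.inl ⟨i, rfl⟩))
  -- image disjointness of distinct singletons on a line
  have hdisjrow : ∀ (i : m) (j j' : n), j ≠ j' → θ {(i, j)} ∩ θ {(i, j')} = ∅ :=
    fun i j j' h => (hdef _ _ (axial_sing i j) (axial_sing i j')).1 (qDefined_sing_row i h)
  have hdisjcol : ∀ (i i' : m) (j : n), i ≠ i' → θ {(i, j)} ∩ θ {(i', j)} = ∅ :=
    fun i i' j h => (hdef _ _ (axial_sing i j) (axial_sing i' j)).1 (qDefined_sing_col j h)
  have part2 : ∀ (i₀ : m) (x : X), x ∈ θ ({i₀} ×ˢ (Set.univ : Set n)) →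
      (∀ i : m, ∃! j : n, x ∈ θ ({(i, j)} : Set (m × n))) ∧
      (∀ j : n, ∃! i : m, x ∈ θ ({(i, j)} : Set (m × n))) := by
    intro i₀ x hx
    constructor
    · intro i
      have hx' : x ∈ θ ({i} ×ˢ (Set.univ : Set n)) := (hrowEq i i₀).symm ▸ hx
      rw [hrowU i, Set.mem_iUnion] at hx'
      obtain ⟨j, hj⟩ := hx'
      refine ⟨j, hj, fun j' hj' => ?_⟩
      by_contra hne
      have := hdisjrow i j' j hne
      exact absurd (Set.mem_inter hj' hj) (by rw [this]; exact not_false)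
    · intro j
      have hx' : x ∈ θ ((Set.univ : Set m) ×ˢ {j}) := (hcolEq i₀ j) ▸ hx
      rw [hcolU j, Set.mem_iUnion] at hx'
      obtain ⟨i, hi⟩ := hx'
      refine ⟨i, hi, fun i' hi' => ?_⟩
      by_contra hne
      have := hdisjcol i' i j hne
      exact absurd (Set.mem_inter hi' hi) (by rw [this]; exact not_false)
  refine ⟨?_, part2⟩
  -- there is a point in the image of the top element
  obtain ⟨i₀⟩ := hmne
  obtain ⟨j₀⟩ := hnne
  have hne : θ ({i₀} ×ˢ (Set.univ : Set n)) ≠ ∅ := by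
    intro h
    have : eqv ({i₀} ×ˢ (Set.univ : Set n)) (∅ : Set (m × n)) :=
      (hfaith _ _ (axial_row i₀) (Or.inl ⟨i₀, ∅, (Set.prod_empty).symm⟩)).2
        (h.trans hzero.symm)
    have hE := eqv_to_E bm bn this
    rcases hE with h' | ⟨-, hT⟩ | ⟨a, c, ⟨h', h''⟩ | ⟨h', h''⟩⟩
    · have hmem : (i₀, j₀) ∈ ({i₀} ×ˢ (Set.univ : Set n)) := memp.2 ⟨rfl, trivial⟩
      rw [h'] at hmem
      exact hmem
    · rcases hT with ⟨i, h'⟩ | ⟨j, h'⟩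
      · have hmem : (i, j₀) ∈ ({i} ×ˢ (Set.univ : Set n)) := memp.2 ⟨rfl, trivial⟩
        rw [← h'] at hmem
        exact hmem
      · have hmem : (i₀, j) ∈ ((Set.univ : Set m) ×ˢ {j}) := memp.2 ⟨trivial, rfl⟩
        rw [← h'] at hmem
        exact hmem
    · exact pairL_ne_rowTop bn a i₀ c h'.symm
    · exact pairR_ne_rowTop bm a i₀ c h'.symm
  obtain ⟨x, hx⟩ := Set.nonempty_iff_ne_empty.2 hne
  obtain ⟨hrow, hcol⟩ := part2 i₀ x hx
  classical
  refine ⟨⟨fun i => (hrow i).choose, fun j => (hcol j).choose, ?_, ?_⟩⟩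
  · intro i
    exact ((hcol (hrow i).choose).choose_spec.2 i (hrow i).choose_spec.1).symm
  · intro j
    exact ((hrow (hcol j).choose).choose_spec.2 j (hcol j).choose_spec.1).symm
end

section
/- For each integer m ≥ 3, the finite partial algebra A(m, m+1) has no (∪•, ∅)-representation by sets. -/
/-- for each integer `m ≥ 3`, the finite quotient partial algebra
`A(m, m+1)` has no `(∪•, ∅)`-representation by sets. -/
theorem stmt_14 (m : ℕ) (hm : 3 ≤ m) :
    ¬ ∃ (X : Type) (θ : Set (Fin m × Fin (m + 1)) → Set X),
      (∀ S T : Set (Fin m × Fin (m + 1)), Axial S → Axial T → (eqv S T ↔ θ S = θ T)) ∧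
      θ (∅ : Set (Fin m × Fin (m + 1))) = ∅ ∧
      (∀ S T : Set (Fin m × Fin (m + 1)), Axial S → Axial T →
        (qDefined S T ↔ θ S ∩ θ T = ∅)) ∧
      (∀ S T : Set (Fin m × Fin (m + 1)), Axial S → Axial T → S ∩ T = ∅ →
        Axial (S ∪ T) → θ (S ∪ T) = θ S ∪ θ T) := by
  rintro ⟨X, θ, h1, h2, h3, h4⟩
  have i0 : Fin m := ⟨0, by omega⟩
  haveI : Nontrivial (Fin m) := ⟨⟨0, by omega⟩, ⟨1, by omega⟩, by simp [Fin.ext_iff]⟩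
  haveI : Nontrivial (Fin (m+1)) := ⟨⟨0, by omega⟩, ⟨1, by omega⟩, by simp [Fin.ext_iff]⟩
  have axRow : ∀ (i : Fin m) (J : Set (Fin (m+1))), Axial ({i} ×ˢ J) :=
    fun i J => Or.inl ⟨i, J, rfl⟩
  have axCol : ∀ (I : Set (Fin m)) (j : Fin (m+1)), Axial (I ×ˢ {j}) :=
    fun I j => Or.inr ⟨I, j, rfl⟩
  have gen_ne : ∀ S T : Set (Fin m × Fin (m+1)), genRel S T → (S.Nonempty ∧ T.Nonempty) := by
    rintro S T (⟨i, j, rfl, rfl⟩ | ⟨i, j, rfl, rfl⟩)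
    · exact ⟨⟨(i, 0), by simp⟩, ⟨(i0, j), by simp⟩⟩
    · obtain ⟨j', hj'⟩ := exists_ne j
      obtain ⟨i', hi'⟩ := exists_ne i
      exact ⟨⟨(i, j'), by simp [hj']⟩, ⟨(i', j), by simp [hi']⟩⟩
  have eqv_ne : ∀ S T : Set (Fin m × Fin (m+1)), eqv S T → (S.Nonempty ↔ T.Nonempty) := by
    intro S T h
    induction h with
    | rel a b hab => exact ⟨fun _ => (gen_ne a b hab).2, fun _ => (gen_ne a b hab).1⟩
    | refl a => exact Iff.rfl
    | symm a b _ ih => exact ih.symm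
    | trans a b c _ _ ih1 ih2 => exact ih1.trans ih2
  set U := θ (({i0} : Set (Fin m)) ×ˢ (Set.univ : Set (Fin (m+1)))) with hUdef
  have hrc : ∀ (i : Fin m) (j : Fin (m+1)),
      θ ({i} ×ˢ (Set.univ : Set (Fin (m+1)))) = θ ((Set.univ : Set (Fin m)) ×ˢ {j}) := by
    intro i j
    exact (h1 _ _ (axRow i _) (axCol _ j)).1 (Relation.EqvGen.rel _ _ (Or.inl ⟨i, j, rfl, rfl⟩))
  have hrow : ∀ i : Fin m, θ ({i} ×ˢ (Set.univ : Set (Fin (m+1)))) = U :=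
    fun i => (hrc i 0).trans (hrc i0 0).symm
  have hcol : ∀ j : Fin (m+1), θ ((Set.univ : Set (Fin m)) ×ˢ {j}) = U :=
    fun j => (hrc i0 j).symm
  have disjRow : ∀ (i : Fin m) (j j' : Fin (m+1)), j ≠ j' →
      θ ({i} ×ˢ ({j} : Set (Fin (m+1)))) ∩ θ ({i} ×ˢ ({j'} : Set (Fin (m+1)))) = ∅ := by
    intro i j j' hjj
    refine (h3 _ _ (axRow i {j}) (axRow i {j'})).1 ?_
    refine ⟨_, _, axRow i {j}, axRow i {j'}, Relation.EqvGen.refl _, Relation.EqvGen.refl _, ?_, ?_⟩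
    · rw [Set.prod_inter_prod]
      simp [Ne.symm hjj]
    · rw [← Set.prod_union]; exact axRow i _
  have disjCol : ∀ (i i' : Fin m) (j : Fin (m+1)), i ≠ i' →
      θ (({i} : Set (Fin m)) ×ˢ {j}) ∩ θ (({i'} : Set (Fin m)) ×ˢ {j}) = ∅ := by
    intro i i' j hii
    refine (h3 _ _ (axCol {i} j) (axCol {i'} j)).1 ?_
    refine ⟨_, _, axCol {i} j, axCol {i'} j, Relation.EqvGen.refl _, Relation.EqvGen.refl _, ?_, ?_⟩
    · rw [Set.prod_inter_prod]
      simp [Ne.symm hii]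
    · rw [← Set.union_prod]; exact axCol _ j
  have rowMem : ∀ (i : Fin m) (J : Set (Fin (m+1))) (x : X), x ∈ θ ({i} ×ˢ J) →
      ∃ j ∈ J, x ∈ θ ({i} ×ˢ ({j} : Set (Fin (m+1)))) := by
    intro i J
    refine Set.Finite.induction_on (motive := fun J _ => ∀ x ∈ θ ({i} ×ˢ J), ∃ j ∈ J, x ∈ θ ({i} ×ˢ ({j} : Set (Fin (m+1))))) J (Set.toFinite J) ?_ ?_
    · intro x hx
      rw [Set.prod_empty, h2] at hx
      exact hx.elim
    · intro a s ha _ ih x hx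
      have hsplit : ({i} : Set (Fin m)) ×ˢ insert a s
          = ({i} ×ˢ ({a} : Set (Fin (m+1)))) ∪ ({i} ×ˢ s) := by
        rw [← Set.prod_union, Set.singleton_union]
      have hdisj : ({i} ×ˢ ({a} : Set (Fin (m+1)))) ∩ ({i} ×ˢ s) = ∅ := by
        rw [Set.prod_inter_prod]
        simp [Set.singleton_inter_eq_empty.2 ha]
      have hθ := h4 _ _ (axRow i {a}) (axRow i s) hdisj (by rw [← hsplit]; exact axRow i _)
      rw [hsplit, hθ] at hx
      rcases hx with hx | hx
      · exact ⟨a, Set.mem_insert a s, hx⟩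
      · obtain ⟨j, hj, hxj⟩ := ih x hx
        exact ⟨j, Set.mem_insert_of_mem a hj, hxj⟩
  have colMem : ∀ (j : Fin (m+1)) (I : Set (Fin m)) (x : X), x ∈ θ (I ×ˢ {j}) →
      ∃ i ∈ I, x ∈ θ (({i} : Set (Fin m)) ×ˢ {j}) := by
    intro j I
    refine Set.Finite.induction_on (motive := fun I _ => ∀ x ∈ θ (I ×ˢ {j}), ∃ i ∈ I, x ∈ θ (({i} : Set (Fin m)) ×ˢ {j})) I (Set.toFinite I) ?_ ?_
    · intro x hx
      rw [Set.empty_prod, h2] at hx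
      exact hx.elim
    · intro a s ha _ ih x hx
      have hsplit : (insert a s) ×ˢ ({j} : Set (Fin (m+1)))
          = (({a} : Set (Fin m)) ×ˢ {j}) ∪ (s ×ˢ {j}) := by
        rw [← Set.union_prod, Set.singleton_union]
      have hdisj : (({a} : Set (Fin m)) ×ˢ {j}) ∩ (s ×ˢ {j}) = ∅ := by
        rw [Set.prod_inter_prod]
        simp [Set.singleton_inter_eq_empty.2 ha]
      have hθ := h4 _ _ (axCol {a} j) (axCol s j) hdisj (by rw [← hsplit]; exact axCol _ j)
      rw [hsplit, hθ] at hx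
      rcases hx with hx | hx
      · exact ⟨a, Set.mem_insert a s, hx⟩
      · obtain ⟨i, hi, hxi⟩ := ih x hx
        exact ⟨i, Set.mem_insert_of_mem a hi, hxi⟩
  have axEmpty : Axial (∅ : Set (Fin m × Fin (m+1))) := Or.inl ⟨i0, ∅, (Set.prod_empty).symm⟩
  have hUne : U.Nonempty := by
    by_contra h
    rw [Set.not_nonempty_iff_eq_empty] at h
    have he : eqv (({i0} : Set (Fin m)) ×ˢ (Set.univ : Set (Fin (m+1)))) ∅ :=
      (h1 _ _ (axRow i0 _) axEmpty).2 (by rw [h2]; exact h)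
    have hne := (eqv_ne _ _ he).1 ⟨(i0, 0), by simp⟩
    exact Set.not_nonempty_empty hne
  obtain ⟨x, hxU⟩ := hUne
  have exrow : ∀ i : Fin m, ∃! j : Fin (m+1), x ∈ θ ({i} ×ˢ ({j} : Set (Fin (m+1)))) := by
    intro i
    have hx' : x ∈ θ ({i} ×ˢ (Set.univ : Set (Fin (m+1)))) := by rw [hrow i]; exact hxU
    obtain ⟨j, _, hj⟩ := rowMem i Set.univ x hx'
    refine ⟨j, hj, fun j' hj' => ?_⟩
    by_contra hne
    exact Set.notMem_empty x ((disjRow i j' j hne) ▸ Set.mem_inter hj' hj)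
  have excol : ∀ j : Fin (m+1), ∃! i : Fin m, x ∈ θ (({i} : Set (Fin m)) ×ˢ {j}) := by
    intro j
    have hx' : x ∈ θ ((Set.univ : Set (Fin m)) ×ˢ {j}) := by rw [hcol j]; exact hxU
    obtain ⟨i, _, hi⟩ := colMem j Set.univ x hx'
    refine ⟨i, hi, fun i' hi' => ?_⟩
    by_contra hne
    exact Set.notMem_empty x ((disjCol i' i j hne) ▸ Set.mem_inter hi' hi)
  choose F hF using exrow
  choose G hG using excol
  have hbij : Function.Bijective F := by
    constructor
    · intro a b hab
      have h1' : x ∈ θ (({a} : Set (Fin m)) ×ˢ {F a}) := (hF a).1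
      have h2' : x ∈ θ (({b} : Set (Fin m)) ×ˢ {F a}) := by rw [hab]; exact (hF b).1
      exact ((hG (F a)).2 a h1').trans ((hG (F a)).2 b h2').symm
    · intro j
      exact ⟨G j, ((hF (G j)).2 j (hG j).1).symm⟩
  have hcard := Fintype.card_of_bijective hbij
  simp [Fintype.card_fin] at hcard
end

section
/- Let A = (A, ⊔•, −•, …) be a complemented partial algebra and θ a map from A to subsets of some set X. Then θ is a disjoint-union representation of the ⊔•-reduct if and only if θ is a subset-complement representation of the −•-reduct. -/
/-- let `A = (A, ⊔•, −•)` be a complemented partial algebra (i.e. it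
satisfies `a −• b = c ⇔ b ⊔• c = a` and there is a unique element `1` with `1 −• a`
defined for all `a`) and let `θ` be a map from `A` to subsets of a set `X`.  Then `θ` is
a disjoint-union representation of the `⊔•`-reduct iff it is a subset-complement
representation of the `−•`-reduct. -/
theorem stmt_16 {A X : Type*} (j k : A → A → Option A)
    (habc : ∀ a b c : A, k a b = some c ↔ j b c = some a)
    (one : A) (hone : ∀ a, (k one a).isSome)
    (huniq : ∀ e : A, (∀ a, (k e a).isSome) → e = one)
    (θ : A → Set X) :
    (Function.Injective θ ∧
      (∀ a b, (j a b).isSome ↔ θ a ∩ θ b = ∅) ∧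
      (∀ a b c, j a b = some c → θ c = θ a ∪ θ b)) ↔
    (Function.Injective θ ∧
      (∀ a b, (k a b).isSome ↔ θ b ⊆ θ a) ∧
      (∀ a b c, k a b = some c → θ c = θ a \ θ b)) := by
  have empt : ∀ s t : Set X, s ∩ t = ∅ ↔ ∀ x, ¬(x ∈ s ∧ x ∈ t) := by
    intro s t
    rw [Set.eq_empty_iff_forall_notMem]
    simp [Set.mem_inter_iff]
  constructor
  · rintro ⟨hinj, hdj, hj⟩
    -- complement facts: if k one a = some c then θ a and θ c partition θ one
    have comp : ∀ a c, k one a = some c →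
        (∀ x, ¬(x ∈ θ a ∧ x ∈ θ c)) ∧ θ one = θ a ∪ θ c := by
      intro a c h
      have hj1 := (habc one a c).mp h
      refine ⟨(empt _ _).mp ((hdj a c).mp (Option.isSome_iff_exists.mpr ⟨one, hj1⟩)), ?_⟩
      exact hj a c one hj1
    refine ⟨hinj, ?_, ?_⟩
    · intro a b
      constructor
      · intro h
        obtain ⟨c, hc⟩ := Option.isSome_iff_exists.mp h
        have hjbc := (habc a b c).mp hc
        have he := hj b c a hjbc
        rw [he]; exact Set.subset_union_left
      · intro hsub
        obtain ⟨abar, habar⟩ := Option.isSome_iff_exists.mp (hone a)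
        obtain ⟨hda, h1a⟩ := comp a abar habar
        have hdb : θ b ∩ θ abar = ∅ := by
          rw [empt]; intro x ⟨hxb, hxa⟩
          exact hda x ⟨hsub hxb, hxa⟩
        obtain ⟨d, hd⟩ := Option.isSome_iff_exists.mp ((hdj b abar).mpr hdb)
        have hdd := hj b abar d hd
        obtain ⟨c, hc⟩ := Option.isSome_iff_exists.mp (hone d)
        obtain ⟨hdc, h1d⟩ := comp d c hc
        have hbc : θ b ∩ θ c = ∅ := by
          rw [empt]; intro x ⟨hxb, hxc⟩
          have hxd : x ∈ θ d := hdd.symm ▸ Set.mem_union_left _ hxb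
          exact hdc x ⟨hxd, hxc⟩
        obtain ⟨e, he⟩ := Option.isSome_iff_exists.mp ((hdj b c).mpr hbc)
        have hee := hj b c e he
        have hea : θ e = θ a := by
          rw [hee]
          clear he
          ext x
          have h1a' := Set.ext_iff.mp h1a x
          have h1d' := Set.ext_iff.mp h1d x
          have hdd' := Set.ext_iff.mp hdd x
          simp only [Set.mem_union] at h1a' h1d' hdd'
          constructor
          · rintro (hxb | hxc)
            · exact hsub hxb
            · have hx1 : x ∈ θ one := h1d'.mpr (Or.inr hxc)
              rcases h1a'.mp hx1 with hxa | hxabar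
              · exact hxa
              · exact absurd ⟨hdd'.mpr (Or.inr hxabar), hxc⟩ (hdc x)
          · intro hxa
            have hx1 : x ∈ θ one := h1a'.mpr (Or.inl hxa)
            rcases h1d'.mp hx1 with hxd | hxc
            · rcases hdd'.mp hxd with hxb | hxabar
              · exact Or.inl hxb
              · exact absurd ⟨hxa, hxabar⟩ (hda x)
            · exact Or.inr hxc
        have : e = a := hinj hea
        subst this
        exact Option.isSome_iff_exists.mpr ⟨c, (habc e b c).mpr he⟩
    · intro a b c h
      have hjbc := (habc a b c).mp h
      have hd := (empt _ _).mp ((hdj b c).mp (Option.isSome_iff_exists.mpr ⟨a, hjbc⟩))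
      have he := hj b c a hjbc
      ext x
      have he' := Set.ext_iff.mp he x
      simp only [Set.mem_union] at he'
      simp only [Set.mem_diff]
      constructor
      · intro hxc
        exact ⟨he'.mpr (Or.inr hxc), fun hxb => hd x ⟨hxb, hxc⟩⟩
      · rintro ⟨hxa, hxb⟩
        rcases he'.mp hxa with h' | h'
        · exact absurd h' hxb
        · exact h'
  · rintro ⟨hinj, hks, hk⟩
    -- complement facts
    have comp : ∀ a c, k one a = some c →
        θ a ⊆ θ one ∧ θ c = θ one \ θ a := by
      intro a c h
      exact ⟨(hks one a).mp (Option.isSome_iff_exists.mpr ⟨c, h⟩), hk one a c h⟩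
    refine ⟨hinj, ?_, ?_⟩
    · intro a b
      constructor
      · intro h
        obtain ⟨c, hc⟩ := Option.isSome_iff_exists.mp h
        have hk' := (habc c a b).mpr hc
        have he := hk c a b hk'
        rw [empt]; intro x ⟨hxa, hxb⟩
        have := Set.ext_iff.mp he x
        simp only [Set.mem_diff] at this
        exact (this.mp hxb).2 hxa
      · intro hd
        have hd' := (empt _ _).mp hd
        obtain ⟨abar, habar⟩ := Option.isSome_iff_exists.mp (hone a)
        obtain ⟨ha1, habar'⟩ := comp a abar habar
        obtain ⟨bbar, hbbar⟩ := Option.isSome_iff_exists.mp (hone b)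
        obtain ⟨hb1, _⟩ := comp b bbar hbbar
        have hsub : θ b ⊆ θ abar := by
          intro x hxb
          rw [habar']
          exact ⟨hb1 hxb, fun hxa => hd' x ⟨hxa, hxb⟩⟩
        obtain ⟨d, hdeq⟩ := Option.isSome_iff_exists.mp ((hks abar b).mpr hsub)
        have hdset := hk abar b d hdeq
        obtain ⟨c, hceq⟩ := Option.isSome_iff_exists.mp (hone d)
        obtain ⟨hd1, hcset⟩ := comp d c hceq
        have hac : θ a ⊆ θ c := by
          intro x hxa
          rw [hcset]
          refine ⟨ha1 hxa, fun hxd => ?_⟩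
          rw [hdset, habar'] at hxd
          exact hxd.1.2 hxa
        obtain ⟨e, heeq⟩ := Option.isSome_iff_exists.mp ((hks c a).mpr hac)
        have heset := hk c a e heeq
        have heb : θ e = θ b := by
          rw [heset, hcset, hdset, habar']
          ext x
          simp only [Set.mem_diff]
          constructor
          · rintro ⟨⟨hx1, hxd⟩, hxa⟩
            by_contra hxb
            exact hxd ⟨⟨hx1, hxa⟩, hxb⟩
          · intro hxb
            exact ⟨⟨hb1 hxb, fun h' => h'.2 hxb⟩, fun hxa => hd' x ⟨hxa, hxb⟩⟩
        have : e = b := hinj heb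
        subst this
        exact Option.isSome_iff_exists.mpr ⟨c, (habc c a e).mp heeq⟩
    · intro a b c h
      have hk' := (habc c a b).mpr h
      have hab : θ a ⊆ θ c := (hks c a).mp (Option.isSome_iff_exists.mpr ⟨b, hk'⟩)
      have hbset := hk c a b hk'
      rw [hbset]
      ext x
      simp only [Set.mem_union, Set.mem_diff]
      constructor
      · intro hxc
        by_cases hxa : x ∈ θ a
        · exact Or.inl hxa
        · exact Or.inr ⟨hxc, hxa⟩
      · rintro (hxa | ⟨hxc, _⟩)
        · exact hab hxa
        · exact hxc
end

section
/- Let A be a structure with a ternary relation J, a binary operation ·, and constant 0 satisfying: J is single-valued and commutative; · is a semilattice operation (commutative, associative, idempotent); J(b,c,d) → J(a·b, a·c, a·d); J(a,0,a) for all a; and (∃c J(a,b,c)) ↔ a·b = 0. Then A has a representation by sets in which J(a,b,c) holds iff θ(a) ∩ θ(b) = ∅ and θ(a) ∪ θ(b) = θ(c), · is represented as intersection, and 0 as the empty set. The representation is given by mapping a to the set of proper ⊔•-prime filters containing a. -/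
/-- A proper ⊔•-prime filter for a structure `(A, J, ·)`: a nonempty proper subset `F`
with `a·b ∈ F ⇔ (a ∈ F ∧ b ∈ F)` such that `a ⊔• b ∈ F` implies `a ∈ F` or `b ∈ F`. -/
def IsPPF {A : Type*} (mul : A → A → A) (J : A → A → A → Prop) (F : Set A) : Prop :=
  F.Nonempty ∧ (∀ a b, mul a b ∈ F ↔ a ∈ F ∧ b ∈ F) ∧ F ≠ Set.univ ∧
    (∀ a b c, J a b c → c ∈ F → a ∈ F ∨ b ∈ F)

section Aux
variable {A : Type*}

theorem aux_le_trans (mul : A → A → A)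
    (hma : ∀ a b c, mul (mul a b) c = mul a (mul b c))
    {u v w : A} (h1 : mul u v = u) (h2 : mul v w = v) : mul u w = u := by
  calc mul u w = mul (mul u v) w := by rw [h1]
    _ = mul u (mul v w) := hma u v w
    _ = mul u v := by rw [h2]
    _ = u := h1

theorem aux_meet_le_left (mul : A → A → A)
    (hmc : ∀ a b, mul a b = mul b a)
    (hma : ∀ a b c, mul (mul a b) c = mul a (mul b c))
    (hmi : ∀ a, mul a a = a) (u v : A) : mul (mul u v) u = mul u v := by
  calc mul (mul u v) u = mul u (mul v u) := hma u v u
    _ = mul u (mul u v) := by rw [hmc v u]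
    _ = mul (mul u u) v := (hma u u v).symm
    _ = mul u v := by rw [hmi u]

theorem aux_meet_le_right (mul : A → A → A)
    (hma : ∀ a b c, mul (mul a b) c = mul a (mul b c))
    (hmi : ∀ a, mul a a = a) (u v : A) : mul (mul u v) v = mul u v := by
  rw [hma, hmi]

theorem aux_le_meet (mul : A → A → A)
    (hma : ∀ a b c, mul (mul a b) c = mul a (mul b c))
    {u v w : A} (h1 : mul u v = u) (h2 : mul u w = u) : mul u (mul v w) = u := by
  rw [← hma, h1, h2]

/-- `(f·g)·x = (f·x)·g` -/
theorem aux_swap (mul : A → A → A)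
    (hmc : ∀ a b, mul a b = mul b a)
    (hma : ∀ a b c, mul (mul a b) c = mul a (mul b c))
    (f g x : A) : mul (mul f g) x = mul (mul f x) g := by
  rw [hma, hmc g x, ← hma]

/-- join of elements below `b` is below `b` -/
theorem aux_join_le (mul : A → A → A) (J : A → A → A → Prop)
    (hsv : ∀ a b c c', J a b c → J a b c' → c = c')
    (hmc : ∀ a b, mul a b = mul b a)
    (hdist : ∀ a b c d, J b c d → J (mul a b) (mul a c) (mul a d))
    {u v w b : A} (hJ : J u v w) (h1 : mul u b = u) (h2 : mul v b = v) :
    mul w b = w := by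
  have h := hdist b u v w hJ
  rw [hmc b u, h1, hmc b v, h2] at h
  have := hsv u v w (mul b w) hJ h
  rw [hmc w b]; exact this.symm

theorem aux_sep (mul : A → A → A) (J : A → A → A → Prop)
    (hsv : ∀ a b c c', J a b c → J a b c' → c = c')
    (hmc : ∀ a b, mul a b = mul b a)
    (hma : ∀ a b c, mul (mul a b) c = mul a (mul b c))
    (hmi : ∀ a, mul a a = a)
    (hdist : ∀ a b c d, J b c d → J (mul a b) (mul a c) (mul a d))
    {a b : A} (hab : mul a b ≠ a) :
    ∃ F : Set A, IsPPF mul J F ∧ a ∈ F ∧ b ∉ F := by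
  set S : Set (Set A) :=
    {F | (∀ x y, mul x y ∈ F ↔ x ∈ F ∧ y ∈ F) ∧ a ∈ F ∧ b ∉ F} with hS
  -- the principal filter of a is in S
  have hx0 : {x | mul a x = a} ∈ S := by
    refine ⟨fun x y => ?_, hmi a, hab⟩
    constructor
    · intro h
      exact ⟨aux_le_trans mul hma h (aux_meet_le_left mul hmc hma hmi x y),
        aux_le_trans mul hma h (aux_meet_le_right mul hma hmi x y)⟩
    · intro ⟨h1, h2⟩; exact aux_le_meet mul hma h1 h2
  have hzorn : ∀ c ⊆ S, IsChain (· ⊆ ·) c → c.Nonempty → ∃ ub ∈ S, ∀ s ∈ c, s ⊆ ub := by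
    intro c hcS hchain hcne
    refine ⟨⋃₀ c, ⟨fun x y => ?_, ?_, ?_⟩, fun s hs => Set.subset_sUnion_of_mem hs⟩
    · constructor
      · rintro ⟨F, hF, hxy⟩
        have := ((hcS hF).1 x y).mp hxy
        exact ⟨⟨F, hF, this.1⟩, ⟨F, hF, this.2⟩⟩
      · rintro ⟨⟨F1, hF1, hx⟩, ⟨F2, hF2, hy⟩⟩
        rcases hchain.total hF1 hF2 with h | h
        · exact ⟨F2, hF2, ((hcS hF2).1 x y).mpr ⟨h hx, hy⟩⟩
        · exact ⟨F1, hF1, ((hcS hF1).1 x y).mpr ⟨hx, h hy⟩⟩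
    · obtain ⟨F, hF⟩ := hcne
      exact ⟨F, hF, (hcS hF).2.1⟩
    · rintro ⟨F, hF, hb⟩
      exact (hcS hF).2.2 hb
  obtain ⟨m, hxm, hmmax⟩ := zorn_subset_nonempty S hzorn _ hx0
  obtain ⟨⟨hmfilt, ham, hbm⟩, hmax⟩ := hmmax
  -- key: for x ∉ m, there is f ∈ m with f·x ≤ b
  have key : ∀ x, x ∉ m → ∃ f ∈ m, mul (mul f x) b = mul f x := by
    intro x hx
    by_contra hb
    set G : Set A := {w | ∃ f ∈ m, mul (mul f x) w = mul f x} with hG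
    have hGfilt : ∀ p q, mul p q ∈ G ↔ p ∈ G ∧ q ∈ G := by
      intro p q
      constructor
      · rintro ⟨f, hf, h⟩
        exact ⟨⟨f, hf, aux_le_trans mul hma h (aux_meet_le_left mul hmc hma hmi p q)⟩,
          ⟨f, hf, aux_le_trans mul hma h (aux_meet_le_right mul hma hmi p q)⟩⟩
      · rintro ⟨⟨f, hf, hp⟩, ⟨g, hg, hq⟩⟩
        refine ⟨mul f g, (hmfilt f g).mpr ⟨hf, hg⟩, ?_⟩
        have hfg_fx : mul (mul (mul f g) x) (mul f x) = mul (mul f g) x := by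
          have h1 : mul (mul f g) x = mul (mul f x) g := aux_swap mul hmc hma f g x
          rw [h1, aux_swap mul hmc hma (mul f x) g (mul f x), hmi (mul f x)]
        have hfg_gx : mul (mul (mul f g) x) (mul g x) = mul (mul f g) x := by
          have h1 : mul (mul f g) x = mul (mul g x) f := by
            rw [hmc f g]; exact aux_swap mul hmc hma g f x
          rw [h1, aux_swap mul hmc hma (mul g x) f (mul g x), hmi (mul g x)]
        exact aux_le_meet mul hma (aux_le_trans mul hma hfg_fx hp)
          (aux_le_trans mul hma hfg_gx hq)
    have hmG : m ⊆ G := fun w hw => ⟨w, hw, aux_meet_le_left mul hmc hma hmi w x⟩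
    have hxG : x ∈ G := ⟨a, ham, aux_meet_le_right mul hma hmi a x⟩
    have hGS : G ∈ S := ⟨hGfilt, hmG ham, fun h => hb (by exact h)⟩
    exact hx (hmax hGS hmG hxG)
  refine ⟨m, ⟨⟨a, ham⟩, hmfilt, ?_, ?_⟩, ham, hbm⟩
  · intro h; exact hbm (h ▸ Set.mem_univ b)
  · intro x y z hJ hz
    by_contra h'
    push_neg at h'
    obtain ⟨f, hf, hfb⟩ := key x h'.1
    obtain ⟨g, hg, hgb⟩ := key y h'.2
    have hfgm : mul f g ∈ m := (hmfilt f g).mpr ⟨hf, hg⟩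
    have hJ' := hdist (mul f g) x y z hJ
    have h1 : mul (mul (mul f g) x) b = mul (mul f g) x := by
      have hle : mul (mul (mul f g) x) (mul f x) = mul (mul f g) x := by
        rw [aux_swap mul hmc hma f g x, aux_swap mul hmc hma (mul f x) g (mul f x),
          hmi (mul f x)]
      exact aux_le_trans mul hma hle hfb
    have h2 : mul (mul (mul f g) y) b = mul (mul f g) y := by
      have hle : mul (mul (mul f g) y) (mul g y) = mul (mul f g) y := by
        rw [hmc f g, aux_swap mul hmc hma g f y, aux_swap mul hmc hma (mul g y) f (mul g y),
          hmi (mul g y)]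
      exact aux_le_trans mul hma hle hgb
    have h3 : mul (mul (mul f g) z) b = mul (mul f g) z :=
      aux_join_le mul J hsv hmc hdist hJ' h1 h2
    have hzm : mul (mul f g) z ∈ m := (hmfilt (mul f g) z).mpr ⟨hfgm, hz⟩
    exact hbm (((hmfilt (mul (mul f g) z) b).mp (h3.symm ▸ hzm)).2)

end Aux

/-- any `(J, ·, 0)`-structure satisfying Ax(J,·,0) is represented by sets,
via the map sending `a` to the set of proper ⊔•-prime filters containing `a`: this map is
injective, represents `·` as intersection, `0` as `∅`, and `J(a,b,c)` holds iff the images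
of `a` and `b` are disjoint with union the image of `c`. -/
theorem stmt_17 {A : Type*} (mul : A → A → A) (zero : A) (J : A → A → A → Prop)
    -- ⊔• is single valued
    (hsv : ∀ a b c c', J a b c → J a b c' → c = c')
    -- ⊔• is commutative
    (hcomm : ∀ a b c, J a b c → J b a c)
    -- ·-semilattice
    (hmc : ∀ a b, mul a b = mul b a)
    (hma : ∀ a b c, mul (mul a b) c = mul a (mul b c))
    (hmi : ∀ a, mul a a = a)
    -- · distributes over ⊔•
    (hdist : ∀ a b c d, J b c d → J (mul a b) (mul a c) (mul a d))
    -- 0 is identity for ⊔•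
    (hzero : ∀ a, J a zero a)
    -- domain of ⊔•
    (hdom : ∀ a b, (∃ c, J a b c) ↔ mul a b = zero) :
    Function.Injective (fun a : A => {F : Set A | IsPPF mul J F ∧ a ∈ F}) ∧
    (∀ a b : A, {F : Set A | IsPPF mul J F ∧ mul a b ∈ F} =
      {F : Set A | IsPPF mul J F ∧ a ∈ F} ∩ {F : Set A | IsPPF mul J F ∧ b ∈ F}) ∧
    {F : Set A | IsPPF mul J F ∧ zero ∈ F} = ∅ ∧
    (∀ a b c : A, J a b c ↔
      ({F : Set A | IsPPF mul J F ∧ a ∈ F} ∩ {F : Set A | IsPPF mul J F ∧ b ∈ F} = ∅ ∧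
       {F : Set A | IsPPF mul J F ∧ a ∈ F} ∪ {F : Set A | IsPPF mul J F ∧ b ∈ F} =
         {F : Set A | IsPPF mul J F ∧ c ∈ F})) := by
  -- basic facts
  have hzb : ∀ x, mul x zero = zero := fun x => (hdom x zero).mp ⟨x, hzero x⟩
  -- J a b c → a ≤ c
  have hsub : ∀ a b c, J a b c → mul a c = a := by
    intro a b c h
    have hab : mul a b = zero := (hdom a b).mp ⟨c, h⟩
    have h1 := hdist a a b c h
    rw [hmi a, hab] at h1
    exact (hsv a zero a (mul a c) (hzero a) h1).symm
  -- sets in θ zero are empty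
  have hzemp : {F : Set A | IsPPF mul J F ∧ zero ∈ F} = ∅ := by
    ext F
    simp only [Set.mem_setOf_eq, Set.mem_empty_iff_false, iff_false, not_and]
    rintro ⟨_, hfilt, hne, _⟩ hz
    apply hne
    ext x
    simp only [Set.mem_univ, iff_true]
    have : mul zero x = zero := by rw [hmc]; exact hzb x
    exact ((hfilt zero x).mp (by rwa [this])).2
  -- injectivity
  have hinj : Function.Injective
      (fun a : A => {F : Set A | IsPPF mul J F ∧ a ∈ F}) := by
    intro a b hab
    by_contra hne
    simp only [Set.ext_iff, Set.mem_setOf_eq] at hab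
    have hcase : mul a b ≠ a ∨ mul b a ≠ b := by
      by_contra h
      push_neg at h
      exact hne (h.1.symm.trans (by rw [hmc]; exact h.2))
    rcases hcase with h | h
    · obtain ⟨F, hF, haF, hbF⟩ := aux_sep mul J hsv hmc hma hmi hdist h
      exact hbF (((hab F).mp ⟨hF, haF⟩).2)
    · obtain ⟨F, hF, hbF, haF⟩ := aux_sep mul J hsv hmc hma hmi hdist h
      exact haF (((hab F).mpr ⟨hF, hbF⟩).2)
  -- mul as intersection
  have hmul : ∀ a b : A, {F : Set A | IsPPF mul J F ∧ mul a b ∈ F} =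
      {F : Set A | IsPPF mul J F ∧ a ∈ F} ∩ {F : Set A | IsPPF mul J F ∧ b ∈ F} := by
    intro a b
    ext F
    simp only [Set.mem_setOf_eq, Set.mem_inter_iff]
    constructor
    · rintro ⟨hF, hab⟩
      have := (hF.2.1 a b).mp hab
      exact ⟨⟨hF, this.1⟩, ⟨hF, this.2⟩⟩
    · rintro ⟨⟨hF, ha⟩, ⟨_, hb⟩⟩
      exact ⟨hF, (hF.2.1 a b).mpr ⟨ha, hb⟩⟩
  -- forward direction of the J characterization
  have hfwd : ∀ a b c : A, J a b c →
      ({F : Set A | IsPPF mul J F ∧ a ∈ F} ∩ {F : Set A | IsPPF mul J F ∧ b ∈ F} = ∅ ∧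
       {F : Set A | IsPPF mul J F ∧ a ∈ F} ∪ {F : Set A | IsPPF mul J F ∧ b ∈ F} =
         {F : Set A | IsPPF mul J F ∧ c ∈ F}) := by
    intro a b c h
    constructor
    · rw [← hmul, (hdom a b).mp ⟨c, h⟩]
      exact hzemp
    · ext F
      simp only [Set.mem_union, Set.mem_setOf_eq]
      constructor
      · rintro (⟨hF, ha⟩ | ⟨hF, hb⟩)
        · exact ⟨hF, ((hF.2.1 a c).mp (by rwa [hsub a b c h])).2⟩
        · exact ⟨hF, ((hF.2.1 b c).mp (by rwa [hsub b a c (hcomm a b c h)])).2⟩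
      · rintro ⟨hF, hc⟩
        rcases hF.2.2.2 a b c h hc with ha | hb
        · exact Or.inl ⟨hF, ha⟩
        · exact Or.inr ⟨hF, hb⟩
  refine ⟨hinj, hmul, hzemp, fun a b c => ⟨hfwd a b c, ?_⟩⟩
  rintro ⟨hdisj, huni⟩
  -- first show a·b = 0
  have hab0 : mul a b = zero := by
    by_contra h0
    have h : mul (mul a b) zero ≠ mul a b := by rw [hzb]; exact fun h => h0 h.symm
    obtain ⟨F, hF, habF, -⟩ := aux_sep mul J hsv hmc hma hmi hdist h
    have := (hF.2.1 a b).mp habF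
    have : F ∈ ({F : Set A | IsPPF mul J F ∧ a ∈ F} ∩
        {F : Set A | IsPPF mul J F ∧ b ∈ F}) := ⟨⟨hF, this.1⟩, ⟨hF, this.2⟩⟩
    rw [hdisj] at this
    exact this
  obtain ⟨d, hd⟩ := (hdom a b).mpr hab0
  have : {F : Set A | IsPPF mul J F ∧ d ∈ F} = {F : Set A | IsPPF mul J F ∧ c ∈ F} :=
    ((hfwd a b d hd).2).symm.trans huni
  rwa [hinj this] at hd
end

section
/- In the filter representation of a (J, ·, 0)-structure satisfying Ax(J,·,0): if a ≰ b (i.e., a·b ≠ a), then any filter maximal among filters containing a but not b is proper and ⊔•-prime. In particular, whenever c ⊔• d is defined and belongs to such a maximal filter F, then c ∈ F or d ∈ F. -/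
/-- A filter for a meet-semilattice operation: a nonempty subset `F` with
`a·b ∈ F ⇔ (a ∈ F ∧ b ∈ F)`. -/
def IsFltr {A : Type*} (mul : A → A → A) (F : Set A) : Prop :=
  F.Nonempty ∧ ∀ a b, mul a b ∈ F ↔ a ∈ F ∧ b ∈ F

/-- in a `(J, ·, 0)`-structure satisfying Ax(J,·,0), if `a ≰ b`
(i.e. `a·b ≠ a`), then any filter maximal among filters containing `a` but not `b` is
proper and ⊔•-prime: whenever `c ⊔• d` is defined and belongs to it, then `c` or `d`
belongs to it. -/
theorem stmt_18 {A : Type*} (mul : A → A → A) (zero : A) (J : A → A → A → Prop)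
    (hsv : ∀ a b c c', J a b c → J a b c' → c = c')
    (hcomm : ∀ a b c, J a b c → J b a c)
    (hmc : ∀ a b, mul a b = mul b a)
    (hma : ∀ a b c, mul (mul a b) c = mul a (mul b c))
    (hmi : ∀ a, mul a a = a)
    (hdist : ∀ a b c d, J b c d → J (mul a b) (mul a c) (mul a d))
    (hzero : ∀ a, J a zero a)
    (hdom : ∀ a b, (∃ c, J a b c) ↔ mul a b = zero)
    (a b : A) (hab : mul a b ≠ a)
    (F : Set A) (hF : IsFltr mul F) (haF : a ∈ F) (hbF : b ∉ F)
    (hmax : ∀ G : Set A, IsFltr mul G → a ∈ G → b ∉ G → F ⊆ G → G = F) :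
    F ≠ Set.univ ∧ ∀ c d e, J c d e → e ∈ F → c ∈ F ∨ d ∈ F := by
  obtain ⟨hFne, hFmul⟩ := hF
  -- basic order lemmas (x ≤ y  ↔  mul x y = x)
  have Lleft : ∀ z x y, mul z (mul x y) = z → mul z x = z := by
    intro z x y h
    have h1 : mul z x = mul (mul z (mul x y)) x := by rw [h]
    rw [h1, hma, hmc (mul x y) x, ← hma x x y, hmi, h]
  have Lright : ∀ z x y, mul z (mul x y) = z → mul z y = z := by
    intro z x y h
    exact Lleft z y x (by rwa [hmc y x])
  have Lmul : ∀ z x y, mul z x = z → mul z y = z → mul z (mul x y) = z := by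
    intro z x y h1 h2
    rw [← hma, h1, h2]
  have Lmono : ∀ w z t, mul z t = z → mul (mul w z) t = mul w z := by
    intro w z t h
    rw [hma, h]
  have Lrearr : ∀ f g x, mul (mul f g) x = mul g (mul f x) := by
    intro f g x
    rw [hmc f g, hma]
  -- the filter generated by F and an element x
  set gen : A → Set A := fun x => {y | ∃ f ∈ F, mul (mul f x) y = mul f x} with hgen
  have genSelf : ∀ x, x ∈ gen x := by
    intro x
    obtain ⟨f, hf⟩ := hFne
    exact ⟨f, hf, by rw [hma, hmi]⟩
  have genSub : ∀ x, F ⊆ gen x := by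
    intro x f hf
    exact ⟨f, hf, by rw [hma, hmc x f, ← hma, hmi]⟩
  have genFltr : ∀ x, IsFltr mul (gen x) := by
    intro x
    refine ⟨⟨x, genSelf x⟩, ?_⟩
    intro y z
    constructor
    · rintro ⟨f, hf, hle⟩
      exact ⟨⟨f, hf, Lleft _ _ _ hle⟩, ⟨f, hf, Lright _ _ _ hle⟩⟩
    · rintro ⟨⟨f, hf, h1⟩, ⟨g, hg, h2⟩⟩
      refine ⟨mul f g, (hFmul f g).mpr ⟨hf, hg⟩, ?_⟩
      apply Lmul
      · rw [Lrearr f g x]; exact Lmono _ _ _ h1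
      · rw [hmc f g, Lrearr g f x]; exact Lmono _ _ _ h2
  have genB : ∀ x, x ∉ F → b ∈ gen x := by
    intro x hx
    by_contra hb'
    have := hmax (gen x) (genFltr x) (genSub x haF) hb' (genSub x)
    exact hx (this ▸ genSelf x)
  constructor
  · intro hU
    exact hbF (hU ▸ Set.mem_univ b)
  · intro c d e hJ heF
    by_contra hcon
    push_neg at hcon
    obtain ⟨hc, hd⟩ := hcon
    obtain ⟨f, hf, hfc⟩ := genB c hc
    obtain ⟨g, hg, hgd⟩ := genB d hd
    set h := mul f g with hh
    have hhF : h ∈ F := (hFmul f g).mpr ⟨hf, hg⟩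
    have h1 : mul (mul h c) b = mul h c := by
      rw [hh, Lrearr f g c]; exact Lmono _ _ _ hfc
    have h2 : mul (mul h d) b = mul h d := by
      rw [hh, hmc f g, Lrearr g f d]; exact Lmono _ _ _ hgd
    have hJ1 : J (mul h c) (mul h d) (mul h e) := hdist h c d e hJ
    have hJ2 : J (mul b (mul h c)) (mul b (mul h d)) (mul b (mul h e)) :=
      hdist b _ _ _ hJ1
    rw [hmc b (mul h c), h1, hmc b (mul h d), h2] at hJ2
    have heq : mul h e = mul b (mul h e) := hsv _ _ _ _ hJ1 hJ2
    have hheF : mul h e ∈ F := (hFmul h e).mpr ⟨hhF, heF⟩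
    have : mul (mul h e) b ∈ F := by rw [hmc, ← heq]; exact hheF
    exact hbF ((hFmul (mul h e) b).mp this).2
end

section
/- An equation s(ā) = t(ā) between (⊔•, 0)-terms is valid over all disjoint-union partial algebras of sets with zero (meaning: for every assignment of variables to sets, both sides are undefined, or both are defined and equal) if and only if (a) the set of variables occurring in s equals the set of variables occurring in t, and (b) the set of variables occurring more than once in s equals the set of variables occurring more than once in t. -/
/-- `(⊔•, 0)`-terms over a set `V` of variables. -/
inductive Trm (V : Type) where
  | var (v : V)
  | zero
  | join (s t : Trm V)

open Classical in
/-- Partial evaluation of a `(⊔•, 0)`-term in a disjoint-union partial algebra of sets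
with zero: `0` denotes `∅` and `s ⊔• t` is defined iff both sides are defined and
have disjoint values, in which case it denotes their union. -/
noncomputable def evalTrm {V X : Type} (ρ : V → Set X) : Trm V → Option (Set X)
  | .var v => some (ρ v)
  | .zero => some (∅ : Set X)
  | .join s t =>
    match evalTrm ρ s, evalTrm ρ t with
    | some S, some T => if S ∩ T = ∅ then some (S ∪ T) else none
    | _, _ => none

/-- The number of occurrences of a variable in a term. -/
def varCount {V : Type} [DecidableEq V] : Trm V → V → ℕ
  | .var w, v => if w = v then 1 else 0
  | .zero, _ => 0
  | .join s t, v => varCount s v + varCount t v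

section Aux
variable {V X : Type} [DecidableEq V]

def Cnd (ρ : V → Set X) (u : Trm V) : Prop :=
  (∀ v, 1 < varCount u v → ρ v = ∅) ∧
  ∀ v w, v ≠ w → 0 < varCount u v → 0 < varCount u w → ρ v ∩ ρ w = ∅

def Val (ρ : V → Set X) (u : Trm V) : Set X := ⋃ v, ⋃ (_ : 0 < varCount u v), ρ v

lemma mem_Val {ρ : V → Set X} {u : Trm V} {x : X} :
    x ∈ Val ρ u ↔ ∃ v, 0 < varCount u v ∧ x ∈ ρ v := by
  simp [Val]

lemma cnd_join {ρ : V → Set X} {s t : Trm V} :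
    Cnd ρ (.join s t) ↔ Cnd ρ s ∧ Cnd ρ t ∧ Val ρ s ∩ Val ρ t = ∅ := by
  constructor
  · rintro ⟨h1, h2⟩
    refine ⟨⟨fun v hv => h1 v (by simp [varCount] at *; omega),
            fun v w hvw hv hw => h2 v w hvw (by simp [varCount]; omega) (by simp [varCount]; omega)⟩,
           ⟨fun v hv => h1 v (by simp [varCount] at *; omega),
            fun v w hvw hv hw => h2 v w hvw (by simp [varCount]; omega) (by simp [varCount]; omega)⟩,
           ?_⟩
    ext x
    simp only [Set.mem_inter_iff, Set.mem_empty_iff_false, iff_false, not_and]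
    rintro hxs hxt
    obtain ⟨v, hv, hxv⟩ := mem_Val.1 hxs
    obtain ⟨w, hw, hxw⟩ := mem_Val.1 hxt
    by_cases hvw : v = w
    · subst hvw
      have : ρ v = ∅ := h1 v (by simp [varCount]; omega)
      simp [this] at hxv
    · have := h2 v w hvw (by simp [varCount]; omega) (by simp [varCount]; omega)
      have : x ∈ ρ v ∩ ρ w := ⟨hxv, hxw⟩
      simp_all
  · rintro ⟨⟨hs1, hs2⟩, ⟨ht1, ht2⟩, hdis⟩
    constructor
    · intro v hv
      simp only [varCount] at hv
      by_cases h1 : 1 < varCount s v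
      · exact hs1 v h1
      by_cases h2 : 1 < varCount t v
      · exact ht1 v h2
      have hvs : 0 < varCount s v := by omega
      have hvt : 0 < varCount t v := by omega
      ext x
      simp only [Set.mem_empty_iff_false, iff_false]
      intro hx
      have : x ∈ Val ρ s ∩ Val ρ t := ⟨mem_Val.2 ⟨v, hvs, hx⟩, mem_Val.2 ⟨v, hvt, hx⟩⟩
      simp [hdis] at this
    · intro v w hvw hv hw
      simp only [varCount] at hv hw
      rcases Nat.lt_or_ge 0 (varCount s v) with hsv | hsv
      · rcases Nat.lt_or_ge 0 (varCount s w) with hsw | hsw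
        · exact hs2 v w hvw hsv hsw
        · have htw : 0 < varCount t w := by omega
          ext x
          simp only [Set.mem_inter_iff, Set.mem_empty_iff_false, iff_false, not_and]
          intro hxv hxw
          have : x ∈ Val ρ s ∩ Val ρ t := ⟨mem_Val.2 ⟨v, hsv, hxv⟩, mem_Val.2 ⟨w, htw, hxw⟩⟩
          simp [hdis] at this
      · have htv : 0 < varCount t v := by omega
        rcases Nat.lt_or_ge 0 (varCount t w) with htw | htw
        · exact ht2 v w hvw htv htw
        · have hsw : 0 < varCount s w := by omega
          ext x
          simp only [Set.mem_inter_iff, Set.mem_empty_iff_false, iff_false, not_and]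
          intro hxv hxw
          have : x ∈ Val ρ s ∩ Val ρ t := ⟨mem_Val.2 ⟨w, hsw, hxw⟩, mem_Val.2 ⟨v, htv, hxv⟩⟩
          simp [hdis] at this

lemma val_join {ρ : V → Set X} {s t : Trm V} :
    Val ρ (.join s t) = Val ρ s ∪ Val ρ t := by
  ext x
  simp only [Set.mem_union, mem_Val, varCount]
  constructor
  · rintro ⟨v, hv, hx⟩
    rcases Nat.lt_or_ge 0 (varCount s v) with h | h
    · exact Or.inl ⟨v, h, hx⟩
    · exact Or.inr ⟨v, by omega, hx⟩
  · rintro (⟨v, hv, hx⟩ | ⟨v, hv, hx⟩)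
    · exact ⟨v, by omega, hx⟩
    · exact ⟨v, by omega, hx⟩

open Classical in
lemma evalTrm_eq (ρ : V → Set X) (u : Trm V) :
    evalTrm ρ u = if Cnd ρ u then some (Val ρ u) else none := by
  induction u with
  | var a =>
    rw [if_pos]
    · have : Val ρ (.var a) = ρ a := by
        ext x; simp [mem_Val, varCount]
        constructor
        · rintro ⟨v, hv, hx⟩
          split at hv
          · subst ‹a = v›; exact hx
          · omega
        · intro hx; exact ⟨a, by simp, hx⟩
      rw [evalTrm, this]
    · refine ⟨fun v hv => ?_, fun v w hvw hv hw => ?_⟩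
      · simp only [varCount] at hv; split at hv <;> omega
      · simp only [varCount] at hv hw
        split_ifs at hv hw with h1 h2
        · exact absurd (h1.symm.trans h2) hvw
        all_goals omega
  | zero =>
    rw [if_pos]
    · have : Val ρ .zero = ∅ := by ext x; simp [mem_Val, varCount]
      rw [evalTrm, this]
    · exact ⟨fun v hv => by simp [varCount] at hv, fun v w _ hv => by simp [varCount] at hv⟩
  | join s t ihs iht =>
    rw [evalTrm, ihs, iht]
    by_cases hs : Cnd ρ s
    · by_cases ht : Cnd ρ t
      · rw [if_pos hs, if_pos ht]
        show (if Val ρ s ∩ Val ρ t = ∅ then some (Val ρ s ∪ Val ρ t) else none) =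
          if Cnd ρ (.join s t) then some (Val ρ (.join s t)) else none
        by_cases hdis : Val ρ s ∩ Val ρ t = ∅
        · rw [if_pos hdis, if_pos (cnd_join.2 ⟨hs, ht, hdis⟩), val_join]
        · rw [if_neg hdis, if_neg (fun h => hdis (cnd_join.1 h).2.2)]
      · rw [if_pos hs, if_neg ht, if_neg (fun h => ht (cnd_join.1 h).2.1)]
    · rw [if_neg hs, if_neg (fun h => hs (cnd_join.1 h).1)]

end Aux

/-- an equation `s = t` between `(⊔•, 0)`-terms is valid over all
disjoint-union partial algebras of sets with zero (for every assignment, both sides are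
undefined or both are defined and equal) iff `s` and `t` have the same set of occurring
variables and the same set of variables occurring more than once. -/


theorem stmt_19 {V : Type} [DecidableEq V] (s t : Trm V) :
    (∀ (X : Type) (ρ : V → Set X), evalTrm ρ s = evalTrm ρ t) ↔
      ({v | 0 < varCount s v} = {v | 0 < varCount t v} ∧
       {v | 1 < varCount s v} = {v | 1 < varCount t v}) := by
  classical
  constructor
  · intro h
    have key : ∀ v : V, ((0 < varCount s v ↔ 0 < varCount t v) ∧
        (1 < varCount s v ↔ 1 < varCount t v)) := by
      intro v
      set ρ : V → Set Unit := fun w => if w = v then Set.univ else ∅ with hρ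
      have hcnd : ∀ u : Trm V, Cnd ρ u ↔ varCount u v ≤ 1 := by
        intro u
        constructor
        · rintro ⟨h1, _⟩
          by_contra hc
          have := h1 v (by omega)
          simp [hρ] at this
        · intro hle
          refine ⟨fun w hw => ?_, fun a b hab ha hb => ?_⟩
          · have : w ≠ v := fun h => by subst h; omega
            simp [hρ, this]
          · by_cases hav : a = v
            · have : b ≠ v := fun h => hab (hav.trans h.symm)
              simp [hρ, this]
            · simp [hρ, hav]
      have hval : ∀ u : Trm V, (() ∈ Val ρ u ↔ 0 < varCount u v) := by
        intro u
        rw [mem_Val]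
        constructor
        · rintro ⟨w, hw, hx⟩
          by_cases hwv : w = v
          · subst hwv; exact hw
          · simp [hρ, hwv] at hx
        · intro hv; exact ⟨v, hv, by simp [hρ]⟩
      have h' := h Unit ρ
      rw [evalTrm_eq, evalTrm_eq] at h'
      by_cases hcs : Cnd ρ s
      · by_cases hct : Cnd ρ t
        · rw [if_pos hcs, if_pos hct] at h'
          have hv : Val ρ s = Val ρ t := by injection h'
          have hm : (() ∈ Val ρ s) ↔ (() ∈ Val ρ t) := by rw [hv]
          rw [hval, hval] at hm
          have h1 := (hcnd s).1 hcs
          have h2 := (hcnd t).1 hct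
          exact ⟨hm, by omega⟩
        · rw [if_pos hcs, if_neg hct] at h'; exact absurd h' (by simp)
      · by_cases hct : Cnd ρ t
        · rw [if_neg hcs, if_pos hct] at h'; exact absurd h' (by simp)
        · have h1 : ¬ varCount s v ≤ 1 := fun hle => hcs ((hcnd s).2 hle)
          have h2 : ¬ varCount t v ≤ 1 := fun hle => hct ((hcnd t).2 hle)
          constructor <;> omega
    constructor
    · ext v; exact (key v).1
    · ext v; exact (key v).2
  · rintro ⟨h0, h1⟩ X ρ
    have h0' : ∀ v, 0 < varCount s v ↔ 0 < varCount t v := fun v =>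
      Set.ext_iff.1 h0 v
    have h1' : ∀ v, 1 < varCount s v ↔ 1 < varCount t v := fun v =>
      Set.ext_iff.1 h1 v
    rw [evalTrm_eq, evalTrm_eq]
    have hcnd : Cnd ρ s ↔ Cnd ρ t := by
      unfold Cnd
      constructor
      · rintro ⟨a, b⟩
        exact ⟨fun v hv => a v ((h1' v).2 hv),
               fun v w hvw hv hw => b v w hvw ((h0' v).2 hv) ((h0' w).2 hw)⟩
      · rintro ⟨a, b⟩
        exact ⟨fun v hv => a v ((h1' v).1 hv),
               fun v w hvw hv hw => b v w hvw ((h0' v).1 hv) ((h0' w).1 hw)⟩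
    have hval : Val ρ s = Val ρ t := by
      ext x
      rw [mem_Val, mem_Val]
      constructor
      · rintro ⟨v, hv, hx⟩; exact ⟨v, (h0' v).1 hv, hx⟩
      · rintro ⟨v, hv, hx⟩; exact ⟨v, (h0' v).2 hv, hx⟩
    rw [hval]
    by_cases hc : Cnd ρ s
    · rw [if_pos hc, if_pos (hcnd.1 hc)]
    · rw [if_neg hc, if_neg (fun h => hc (hcnd.2 h))]
end
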